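/- arXiv:1708.04040 — 2 statements merged into one kernel-verified Lean document; each statement's English description precedes it below -/
import Mathlib

section
/- Let u₀ ∈ H²_{0,σ}(T³) and let u_n^{α,m}, m = 0,…,M, be a solution of the Euler–Fourier–Galerkin scheme. Then for all M ∈ ℕ and all m = 1,…,M the discrete energy equality holds: ‖u_n^{α,m}‖₂² + Σ_{i=1}^m ‖u_n^{α,i} − u_n^{α,i−1}‖₂² + 2κ Σ_{i=1}^m ‖∇u_n^{α,i}‖₂² + α²‖∇u_n^{α,m}‖₂² + α² Σ_{i=1}^m ‖∇u_n^{α,i} − ∇u_n^{α,i−1}‖₂² = ‖P_n u₀‖₂² + α²‖∇P_n u₀‖₂², and in particular the left-hand side is bounded by ‖u₀‖₂² + α²‖∇u₀‖₂². -/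
/-!
Common framework: the 3-torus `𝕋³ = ℝ³ / 2πℤ³` is modelled by `2π`-periodic
functions on `ℝ³`; space integrals are taken over the fundamental domain
`Box = [0,2π)³`.  Vector fields are described through their Fourier
coefficients `c : (Fin 3 → ℤ) → Fin 3 → ℂ` (with reality, zero-mean and
divergence-free constraints), realized as functions via `u(x) = Σ_k c_k e^{ik·x}`.
`L²`-type norms of such fields are expressed through Parseval's identity.
-/

noncomputable section

open MeasureTheory Filter Real

/-- Points of `ℝ³`; the torus is `ℝ³` modulo `2π`-periodicity. -/
abbrev Vec3 : Type := Fin 3 → ℝ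

/-- Fundamental domain `[0,2π)³` of the torus `𝕋³ = ℝ³/2πℤ³`. -/
def Box : Set Vec3 := Set.univ.pi fun _ : Fin 3 => Set.Ico (0 : ℝ) (2 * π)

/-- `2π`-periodicity in each space variable. -/
def SpacePeriodic {E : Type*} (f : Vec3 → E) : Prop :=
  ∀ (x : Vec3) (m : Fin 3 → ℤ), f (fun j => x j + 2 * π * (m j : ℝ)) = f x

/-- Fourier coefficients of a vector field on the torus. -/
abbrev Coef : Type := (Fin 3 → ℤ) → Fin 3 → ℂ

/-- `|k|²` for a frequency `k ∈ ℤ³`. -/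
def kSq (k : Fin 3 → ℤ) : ℤ := ∑ j, (k j) ^ 2

/-- The character `e^{i k·x}`. -/
def eK (k : Fin 3 → ℤ) (x : Vec3) : ℂ :=
  Complex.exp (Complex.I * ∑ j, (k j : ℂ) * (x j : ℂ))

/-- Realization of Fourier coefficients as a (real) vector field on the torus. -/
def realize (c : Coef) (x : Vec3) (i : Fin 3) : ℝ := (∑' k, c k i * eK k x).re

/-- Realization of scalar Fourier coefficients as a function on the torus. -/
def realizeS (q : (Fin 3 → ℤ) → ℂ) (x : Vec3) : ℝ := (∑' k, q k * eK k x).re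

/-- Fourier coefficients of the partial derivative `∂_j u`. -/
def pd (j : Fin 3) (c : Coef) : Coef := fun k i => Complex.I * (k j : ℂ) * c k i

/-- Fourier coefficients of `Δu`. -/
def lapC (c : Coef) : Coef := fun k i => -((kSq k : ℂ)) * c k i

/-- Difference of two coefficient fields. -/
def subC (c d : Coef) : Coef := fun k i => c k i - d k i

/-- A real, zero-mean, divergence-free field (spectral form of the constraints). -/
structure IsDivFreeField (c : Coef) : Prop where
  zeroMean : ∀ i, c 0 i = 0
  reality : ∀ k i, c (-k) i = starRingEnd ℂ (c k i)
  divFree : ∀ k, ∑ j, (k j : ℂ) * c k j = 0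

/-- Membership in `V_n`: a real, zero-mean, divergence-free trigonometric
polynomial with modes `0 < |k| ≤ n`. -/
def MemVn (n : ℕ) (c : Coef) : Prop :=
  IsDivFreeField c ∧ ∀ k, (n : ℤ) ^ 2 < kSq k → ∀ i, c k i = 0

/-- `u₀ ∈ H²_{0,σ}(𝕋³)`, spectrally. -/
def MemH2 (c : Coef) : Prop :=
  IsDivFreeField c ∧ Summable fun k => (1 + (kSq k : ℝ)) ^ 2 * ∑ i, Complex.normSq (c k i)

/-- The projection `P_n` (restricted to divergence-free fields, it is the
truncation to the modes `|k| ≤ n`). -/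
def projN (n : ℕ) (c : Coef) : Coef :=
  fun k i => if kSq k ≤ (n : ℤ) ^ 2 then c k i else 0

/-- `‖u‖₂²` (squared `L²(𝕋³)` norm), via Parseval. -/
def l2S (c : Coef) : ℝ := (2 * π) ^ 3 * ∑' k, ∑ i, Complex.normSq (c k i)

/-- `‖∇u‖₂²`, via Parseval. -/
def gradS (c : Coef) : ℝ := (2 * π) ^ 3 * ∑' k, (kSq k : ℝ) * ∑ i, Complex.normSq (c k i)

/-- `‖Δu‖₂²`, via Parseval. -/
def lapS (c : Coef) : ℝ := (2 * π) ^ 3 * ∑' k, (kSq k : ℝ) ^ 2 * ∑ i, Complex.normSq (c k i)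

/-- The `L²(𝕋³)` inner product `(u,w)`, via Parseval. -/
def ipS (c d : Coef) : ℝ := (2 * π) ^ 3 * ∑' k, ∑ i, (c k i * starRingEnd ℂ (d k i)).re

/-- The inner product `(∇u,∇w)`, via Parseval. -/
def gipS (c d : Coef) : ℝ :=
  (2 * π) ^ 3 * ∑' k, (kSq k : ℝ) * ∑ i, (c k i * starRingEnd ℂ (d k i)).re

/-- The trilinear term `((u·∇)u, w)` in `L²(𝕋³)`. -/
def nlF (c w : Coef) : ℝ :=
  ∫ x in Box, ∑ i, (∑ j, realize c x j * realize (pd j c) x i) * realize w x i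

/-- Discrete time derivative of coefficient fields: `(a - b)/κ`. -/
def dtc (κ : ℝ) (a b : Coef) : Coef := fun k i => (a k i - b k i) / (κ : ℂ)

/-- The Euler–Fourier–Galerkin scheme for the Navier–Stokes–Voigt equations:
`u 0 = P_n u₀` and, for `m = 1,…,M`, `u m ∈ V_n` satisfies
`(d_t u^m, w) + α²(d_t ∇u^m, ∇w) + (∇u^m, ∇w) + ((u^m·∇)u^m, w) = 0`
for all `w ∈ V_n`, where `κ = T/M`. -/
def Scheme (T α : ℝ) (n M : ℕ) (c0 : Coef) (u : ℕ → Coef) : Prop :=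
  u 0 = projN n c0 ∧
  ∀ m, 1 ≤ m → m ≤ M → MemVn n (u m) ∧
    ∀ w : Coef, MemVn n w →
      ipS (dtc (T / (M : ℝ)) (u m) (u (m - 1))) w
        + α ^ 2 * gipS (dtc (T / (M : ℝ)) (u m) (u (m - 1))) w
        + gipS (u m) w + nlF (u m) w = 0

/-- Piecewise-constant time interpolant: equals `u m` on `[t_{m-1}, t_m)`,
and `u M` at `t = T`, where `t_m = m·(T/M)`. -/
def pwc (T : ℝ) (M : ℕ) (u : ℕ → Coef) : ℝ → Coef := fun t =>
  if t = T then u M else u ((Int.floor (t / (T / (M : ℝ)))).toNat + 1)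

/-- Piecewise-linear (in time) interpolant. -/
def pwl (T : ℝ) (M : ℕ) (u : ℕ → Coef) : ℝ → Coef := fun t =>
  if t = T then u M else fun k i =>
    u (Int.floor (t / (T / (M : ℝ)))).toNat k i +
      (((t - ((Int.floor (t / (T / (M : ℝ)))).toNat : ℝ) * (T / (M : ℝ))) / (T / (M : ℝ)) : ℝ) : ℂ) *
        (u ((Int.floor (t / (T / (M : ℝ)))).toNat + 1) k i
          - u (Int.floor (t / (T / (M : ℝ)))).toNat k i)

/-- The time derivative `∂_t v` of the piecewise-linear interpolant:
equals `d_t u^m = (u^m - u^{m-1})/κ` on `(t_{m-1}, t_m)`. -/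
def pwdt (T : ℝ) (M : ℕ) (u : ℕ → Coef) : ℝ → Coef := fun t k i =>
  (u ((Int.floor (t / (T / (M : ℝ)))).toNat + 1) k i
    - u (Int.floor (t / (T / (M : ℝ)))).toNat k i) / ((T / (M : ℝ) : ℝ) : ℂ)

/-- Spectral solution of the pressure Poisson problem
`-Δp = ∇·(∇·(u⊗u))`, i.e. `p̂_k = -(k⊗k/|k|²) : (u⊗u)^̂_k` for `k ≠ 0`. -/
def presC (c : Coef) : (Fin 3 → ℤ) → ℂ := fun k =>
  if kSq k = 0 then 0 else
    -(∑ a, ∑ b, (k a : ℂ) * (k b : ℂ) * ∑' m, c m a * c (k - m) b) / (kSq k : ℂ)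

/-- The Leray projection at frequency `k`: `v ↦ v - (v·k)k/|k|²`. -/
def lerayK (k : Fin 3 → ℤ) (v : Fin 3 → ℂ) : Fin 3 → ℂ := fun i =>
  if kSq k = 0 then 0 else v i - ((∑ j, (k j : ℂ) * v j) / (kSq k : ℂ)) * (k i : ℂ)

/-- `Q_n = P - P_n`: the Leray-projected Fourier modes with `|k| > n`. -/
def Qn (n : ℕ) (c : Coef) : Coef := fun k =>
  if kSq k ≤ (n : ℤ) ^ 2 then 0 else lerayK k (c k)

/-- Fourier coefficients of `(u·∇)u` (a convolution). -/
def nlinC (c : Coef) : Coef := fun k i =>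
  ∑' m : Fin 3 → ℤ, ∑ j, c (k - m) j * (Complex.I * (m j : ℂ) * c m i)

/-- The partial derivative `∂_j f` of a function on the torus. -/
def pdF (f : Vec3 → ℝ) (j : Fin 3) (x : Vec3) : ℝ := fderiv ℝ f x (Pi.single j 1)

/-- The Laplacian of a function on the torus. -/
def lapF (f : Vec3 → ℝ) (x : Vec3) : ℝ := ∑ j, pdF (fun y => pdF f j y) j x

/-- The `k`-th Fourier coefficient of a function on the torus. -/
def fCoef (f : Vec3 → ℝ) (k : Fin 3 → ℤ) : ℂ :=
  ((1 / (2 * π) ^ 3 : ℝ) : ℂ) * ∫ x in Box, (f x : ℂ) * eK (-k) x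

/-- Fourier coefficients of the product `u·φ` of a (coefficient) vector field
with a scalar function. -/
def prodCoef (U : Coef) (f : Vec3 → ℝ) : Coef := fun k i => ∑' m, U m i * fCoef f (k - m)

/-- Squared `H^{-2}` norm: `Σ_{k≠0} |k|^{-4} |ĝ_k|²`. -/
def hm2 (c : Coef) : ℝ :=
  ∑' k, if kSq k = 0 then 0 else (∑ i, Complex.normSq (c k i)) / (kSq k : ℝ) ^ 2

/-- A scalar space-time test function: smooth, `2π`-periodic in space, with
compact time support contained in `(0,T)`. -/
structure IsTestS (T : ℝ) (φ : ℝ → Vec3 → ℝ) : Prop where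
  smooth : ContDiff ℝ (⊤ : ℕ∞) fun p : ℝ × Vec3 => φ p.1 p.2
  periodic : ∀ t, SpacePeriodic (φ t)
  tsupport : ∃ a b : ℝ, 0 < a ∧ b < T ∧ ∀ t, t ∉ Set.Icc a b → ∀ x, φ t x = 0

/-- A vector test function for the weak formulation: smooth, `2π`-periodic in
space, divergence-free, with zero spatial mean, supported in time in `[0,T)`. -/
structure IsTestV (T : ℝ) (φ : ℝ → Vec3 → Fin 3 → ℝ) : Prop where
  smooth : ContDiff ℝ (⊤ : ℕ∞) fun p : ℝ × Vec3 => φ p.1 p.2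
  periodic : ∀ t, SpacePeriodic (φ t)
  tsupport : ∃ b : ℝ, b < T ∧ ∀ t, b ≤ t → ∀ x i, φ t x i = 0
  divFree : ∀ t x, ∑ j, pdF (fun y => φ t y j) j x = 0
  zeroMean : ∀ t i, (∫ x in Box, φ t x i) = 0

/-- `u ∈ L^∞(0,T;L²_{0,σ}) ∩ L²(0,T;H¹_{0,σ})`, with `G` its weak spatial
gradient (`G t x j i = ∂_j u_i(t,x)`). -/
structure InEnergySpace (T : ℝ) (u : ℝ → Vec3 → Fin 3 → ℝ)
    (G : ℝ → Vec3 → Fin 3 → Fin 3 → ℝ) : Prop where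
  meas_u : Measurable fun p : ℝ × Vec3 => u p.1 p.2
  meas_G : Measurable fun p : ℝ × Vec3 => G p.1 p.2
  periodic_u : ∀ t, SpacePeriodic (u t)
  periodic_G : ∀ t, SpacePeriodic (G t)
  linfty_l2 : ∃ C : ℝ, ∀ᵐ t ∂volume.restrict (Set.Ioo 0 T),
    (∫ x in Box, ∑ i, (u t x i) ^ 2) ≤ C
  l2_h1 : IntegrableOn
    (fun p : ℝ × Vec3 => ∑ i, (u p.1 p.2 i) ^ 2 + ∑ j, ∑ i, (G p.1 p.2 j i) ^ 2)
    (Set.Ioo 0 T ×ˢ Box)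
  weak_grad : ∀ ψ : ℝ → Vec3 → ℝ, IsTestS T ψ → ∀ i j,
    (∫ t in Set.Ioo 0 T, ∫ x in Box, u t x i * pdF (ψ t) j x)
      = -∫ t in Set.Ioo 0 T, ∫ x in Box, G t x j i * ψ t x
  zeroMean : ∀ᵐ t ∂volume.restrict (Set.Ioo 0 T), ∀ i, (∫ x in Box, u t x i) = 0
  divFree : ∀ ψ : ℝ → Vec3 → ℝ, IsTestS T ψ →
    (∫ t in Set.Ioo 0 T, ∫ x in Box, ∑ j, u t x j * pdF (ψ t) j x) = 0

/-- A Leray–Hopf weak solution of the Navier–Stokes equations on `(0,T)×𝕋³`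
with initial datum `u₀` (given by its Fourier coefficients `c0`); `G` is the
weak gradient of `u`. -/
structure IsLerayHopf (T : ℝ) (c0 : Coef) (u : ℝ → Vec3 → Fin 3 → ℝ)
    (G : ℝ → Vec3 → Fin 3 → Fin 3 → ℝ) : Prop where
  energySpace : InEnergySpace T u G
  weakForm : ∀ φ : ℝ → Vec3 → Fin 3 → ℝ, IsTestV T φ →
    (∫ t in Set.Ioo 0 T,
      ((∫ x in Box, ∑ i, u t x i * deriv (fun s => φ s x i) t)
        - (∫ x in Box, ∑ i, ∑ j, G t x j i * pdF (fun y => φ t y i) j x)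
        - ∫ x in Box, ∑ i, (∑ j, u t x j * G t x j i) * φ t x i))
      + (∫ x in Box, ∑ i, realize c0 x i * φ 0 x i) = 0
  energyIneq : ∀ t ∈ Set.Icc 0 T,
    (1 / 2) * (∫ x in Box, ∑ i, (u t x i) ^ 2)
      + (∫ s in Set.Ioo 0 t, ∫ x in Box, ∑ j, ∑ i, (G s x j i) ^ 2)
      ≤ (1 / 2) * l2S c0

/-- A suitable weak solution: a Leray–Hopf weak solution together with a
pressure `p ∈ L^{5/3}((0,T)×𝕋³)` satisfying the local energy inequality. -/
structure IsSuitable (T : ℝ) (c0 : Coef) (u : ℝ → Vec3 → Fin 3 → ℝ)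
    (G : ℝ → Vec3 → Fin 3 → Fin 3 → ℝ) (p : ℝ → Vec3 → ℝ) : Prop where
  lerayHopf : IsLerayHopf T c0 u G
  meas_p : Measurable fun q : ℝ × Vec3 => p q.1 q.2
  p_L53 : IntegrableOn (fun q : ℝ × Vec3 => |p q.1 q.2| ^ ((5 : ℝ) / 3))
    (Set.Ioo 0 T ×ˢ Box)
  localEnergy : ∀ φ : ℝ → Vec3 → ℝ, IsTestS T φ → (∀ t x, 0 ≤ φ t x) →
    (∫ t in Set.Ioo 0 T, ∫ x in Box, (∑ j, ∑ i, (G t x j i) ^ 2) * φ t x)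
      ≤ ∫ t in Set.Ioo 0 T, ∫ x in Box,
          ((∑ i, (u t x i) ^ 2) / 2) * (deriv (fun s => φ s x) t + lapF (φ t) x)
            + ((∑ i, (u t x i) ^ 2) / 2 + p t x) * ∑ j, u t x j * pdF (φ t) j x


/-! ### Auxiliary lemmas for the discrete energy equality -/

namespace DEE

open Complex Finset

/-- Finite set of frequencies containing all `k` with `|k|² ≤ n²`. -/
def Kn (n : ℕ) : Finset (Fin 3 → ℤ) :=
  Fintype.piFinset fun _ => Finset.Icc (-(n : ℤ)) (n : ℤ)

lemma kSq_nonneg (k : Fin 3 → ℤ) : 0 ≤ kSq k :=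
  Finset.sum_nonneg fun j _ => sq_nonneg _

lemma mem_Kn_of_kSq {n : ℕ} {k : Fin 3 → ℤ} (h : kSq k ≤ (n : ℤ) ^ 2) : k ∈ Kn n := by
  rw [Kn, Fintype.mem_piFinset]
  intro j
  rw [Finset.mem_Icc]
  have h1 : (k j) ^ 2 ≤ kSq k := by
    exact Finset.single_le_sum (f := fun j => (k j) ^ 2) (fun i _ => sq_nonneg _)
      (Finset.mem_univ j)
  have h2 : (k j) ^ 2 ≤ (n : ℤ) ^ 2 := le_trans h1 h
  have hn : (0 : ℤ) ≤ (n : ℤ) := Int.ofNat_nonneg n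
  constructor <;> nlinarith

lemma neg_mem_Kn {n : ℕ} {k : Fin 3 → ℤ} (h : k ∈ Kn n) : -k ∈ Kn n := by
  rw [Kn, Fintype.mem_piFinset] at h ⊢
  intro j
  have := h j
  rw [Finset.mem_Icc] at this ⊢
  simp only [Pi.neg_apply]
  omega

/-- Support condition: `c` vanishes outside `Kn n`. -/
def SuppN (n : ℕ) (c : Coef) : Prop := ∀ k, k ∉ Kn n → ∀ i, c k i = 0

lemma suppN_of_memVn {n : ℕ} {c : Coef} (h : MemVn n c) : SuppN n c := by
  intro k hk i
  apply h.2
  by_contra hle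
  exact hk (mem_Kn_of_kSq (le_of_not_gt hle))

lemma suppN_projN (n : ℕ) (c : Coef) : SuppN n (projN n c) := by
  intro k hk i
  rw [projN]
  rw [if_neg]
  intro hle
  exact hk (mem_Kn_of_kSq hle)

lemma suppN_subC {n : ℕ} {a b : Coef} (ha : SuppN n a) (hb : SuppN n b) :
    SuppN n (subC a b) := by
  intro k hk i
  simp [subC, ha k hk i, hb k hk i]

lemma suppN_pd {n : ℕ} {c : Coef} (h : SuppN n c) (j : Fin 3) : SuppN n (pd j c) := by
  intro k hk i
  simp [pd, h k hk i]

/-! ### Finite-sum formulas for the Parseval quantities -/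

lemma l2S_eq {n : ℕ} {c : Coef} (h : SuppN n c) :
    l2S c = (2 * π) ^ 3 * ∑ k ∈ Kn n, ∑ i, Complex.normSq (c k i) := by
  rw [l2S, tsum_eq_sum (s := Kn n)]
  intro k hk
  simp [h k hk]

lemma gradS_eq {n : ℕ} {c : Coef} (h : SuppN n c) :
    gradS c = (2 * π) ^ 3 * ∑ k ∈ Kn n, (kSq k : ℝ) * ∑ i, Complex.normSq (c k i) := by
  rw [gradS, tsum_eq_sum (s := Kn n)]
  intro k hk
  simp [h k hk]

lemma ipS_eq {n : ℕ} {c : Coef} (d : Coef) (h : SuppN n c) :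
    ipS c d = (2 * π) ^ 3 * ∑ k ∈ Kn n, ∑ i, (c k i * starRingEnd ℂ (d k i)).re := by
  rw [ipS, tsum_eq_sum (s := Kn n)]
  intro k hk
  simp [h k hk]

lemma gipS_eq {n : ℕ} {c : Coef} (d : Coef) (h : SuppN n c) :
    gipS c d = (2 * π) ^ 3 * ∑ k ∈ Kn n, (kSq k : ℝ) * ∑ i, (c k i * starRingEnd ℂ (d k i)).re := by
  rw [gipS, tsum_eq_sum (s := Kn n)]
  intro k hk
  simp [h k hk]

lemma gipS_self (c : Coef) : gipS c c = gradS c := by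
  rw [gipS, gradS]
  congr 1
  apply tsum_congr
  intro k
  congr 1
  apply Finset.sum_congr rfl
  intro i _
  rw [Complex.mul_conj]
  simp

/-! ### Polarization identities -/

lemma twoRe_pol (z w : ℂ) :
    2 * ((z - w) * starRingEnd ℂ z).re
      = Complex.normSq z - Complex.normSq w + Complex.normSq (z - w) := by
  simp only [Complex.normSq_apply, Complex.mul_re, Complex.sub_re, Complex.sub_im,
    Complex.conj_re, Complex.conj_im]
  ring

lemma ipS_pol {n : ℕ} {a b : Coef} (ha : SuppN n a) (hb : SuppN n b) :
    2 * ipS (subC a b) a = l2S a - l2S b + l2S (subC a b) := by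
  rw [ipS_eq a (suppN_subC ha hb), l2S_eq ha, l2S_eq hb, l2S_eq (suppN_subC ha hb)]
  have hkey : (∑ k ∈ Kn n, ∑ i, Complex.normSq (a k i))
      - (∑ k ∈ Kn n, ∑ i, Complex.normSq (b k i))
      + (∑ k ∈ Kn n, ∑ i, Complex.normSq (subC a b k i))
      = 2 * ∑ k ∈ Kn n, ∑ i, (subC a b k i * starRingEnd ℂ (a k i)).re := by
    rw [← Finset.sum_sub_distrib, ← Finset.sum_add_distrib, Finset.mul_sum]
    apply Finset.sum_congr rfl
    intro k _
    rw [Finset.mul_sum, ← Finset.sum_sub_distrib, ← Finset.sum_add_distrib]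
    apply Finset.sum_congr rfl
    intro i _
    exact (twoRe_pol (a k i) (b k i)).symm
  linear_combination (-((2*π)^3)) * hkey

lemma gipS_pol {n : ℕ} {a b : Coef} (ha : SuppN n a) (hb : SuppN n b) :
    2 * gipS (subC a b) a = gradS a - gradS b + gradS (subC a b) := by
  rw [gipS_eq a (suppN_subC ha hb), gradS_eq ha, gradS_eq hb, gradS_eq (suppN_subC ha hb)]
  have hkey : (∑ k ∈ Kn n, (kSq k : ℝ) * ∑ i, Complex.normSq (a k i))
      - (∑ k ∈ Kn n, (kSq k : ℝ) * ∑ i, Complex.normSq (b k i))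
      + (∑ k ∈ Kn n, (kSq k : ℝ) * ∑ i, Complex.normSq (subC a b k i))
      = 2 * ∑ k ∈ Kn n, (kSq k : ℝ) * ∑ i, (subC a b k i * starRingEnd ℂ (a k i)).re := by
    rw [← Finset.sum_sub_distrib, ← Finset.sum_add_distrib, Finset.mul_sum]
    apply Finset.sum_congr rfl
    intro k _
    have hinner : (∑ i, Complex.normSq (a k i)) - (∑ i, Complex.normSq (b k i))
        + (∑ i, Complex.normSq (subC a b k i))
        = 2 * ∑ i, (subC a b k i * starRingEnd ℂ (a k i)).re := by
      rw [Finset.mul_sum, ← Finset.sum_sub_distrib, ← Finset.sum_add_distrib]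
      apply Finset.sum_congr rfl
      intro i _
      exact (twoRe_pol (a k i) (b k i)).symm
    linear_combination (kSq k : ℝ) * hinner
  linear_combination (-((2*π)^3)) * hkey

/-! ### Discrete time derivative -/

lemma ipS_dtc (κ : ℝ) (hκ : κ ≠ 0) (a b w : Coef) :
    ipS (dtc κ a b) w = ipS (subC a b) w / κ := by
  rw [ipS, ipS, mul_div_assoc]
  congr 1
  rw [← tsum_div_const]
  apply tsum_congr
  intro k
  rw [Finset.sum_div]
  apply Finset.sum_congr rfl
  intro i _
  rw [dtc, subC]
  rw [div_mul_eq_mul_div, Complex.div_ofReal_re]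

lemma gipS_dtc (κ : ℝ) (hκ : κ ≠ 0) (a b w : Coef) :
    gipS (dtc κ a b) w = gipS (subC a b) w / κ := by
  rw [gipS, gipS, mul_div_assoc]
  congr 1
  rw [← tsum_div_const]
  apply tsum_congr
  intro k
  rw [mul_div_assoc, Finset.sum_div]
  congr 1
  apply Finset.sum_congr rfl
  intro i _
  rw [dtc, subC]
  rw [div_mul_eq_mul_div, Complex.div_ofReal_re]

/-! ### Fourier analysis on the box: the trilinear term vanishes -/

lemma eK_continuous (k : Fin 3 → ℤ) : Continuous (eK k) := by
  apply Complex.continuous_exp.comp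
  apply Continuous.mul continuous_const
  apply continuous_finset_sum
  intro j _
  exact continuous_const.mul (Complex.continuous_ofReal.comp (continuous_apply j))

lemma eK_mul (p q : Fin 3 → ℤ) (x : Vec3) : eK p x * eK q x = eK (p + q) x := by
  rw [eK, eK, eK, ← Complex.exp_add]
  congr 1
  rw [← mul_add, ← Finset.sum_add_distrib]
  congr 1
  apply Finset.sum_congr rfl
  intro j _
  simp only [Pi.add_apply]
  push_cast
  ring

lemma conj_eK (k : Fin 3 → ℤ) (x : Vec3) : starRingEnd ℂ (eK k x) = eK (-k) x := by
  rw [eK, eK, ← Complex.exp_conj]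
  congr 1
  rw [map_mul, Complex.conj_I, map_sum]
  simp only [map_mul, Complex.conj_ofReal, map_intCast, Pi.neg_apply, Int.cast_neg,
    neg_mul, Finset.sum_neg_distrib]
  ring

lemma realize_eq {n : ℕ} {c : Coef} (hs : SuppN n c)
    (hr : ∀ k i, c (-k) i = starRingEnd ℂ (c k i)) (x : Vec3) (i : Fin 3) :
    ((realize c x i : ℝ) : ℂ) = ∑ k ∈ Kn n, c k i * eK k x := by
  have htsum : ∑' k, c k i * eK k x = ∑ k ∈ Kn n, c k i * eK k x :=
    tsum_eq_sum (fun k hk => by rw [hs k hk i, zero_mul])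
  have hconj : starRingEnd ℂ (∑ k ∈ Kn n, c k i * eK k x) = ∑ k ∈ Kn n, c k i * eK k x := by
    rw [map_sum]
    apply Finset.sum_equiv (Equiv.neg (Fin 3 → ℤ))
    · intro k
      constructor
      · intro hk; exact neg_mem_Kn hk
      · intro hk
        have := neg_mem_Kn hk
        simpa using this
    · intro k _
      rw [map_mul, conj_eK]
      simp only [Equiv.neg_apply]
      congr 1
      rw [← hr]
  have him : (∑ k ∈ Kn n, c k i * eK k x).im = 0 := by
    have h := congrArg Complex.im hconj
    simp only [Complex.conj_im] at h
    linarith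
  rw [realize, htsum]
  apply Complex.ext
  · simp
  · simp [him]

lemma integrableOn_box {f : Vec3 → ℂ} (hf : Continuous f) : IntegrableOn f Box := by
  have hc : IsCompact (Set.pi Set.univ fun _ : Fin 3 => Set.Icc (0:ℝ) (2*π)) :=
    isCompact_univ_pi fun _ => isCompact_Icc
  apply (hf.continuousOn.integrableOn_compact hc).mono_set
  intro x hx j hj
  exact Set.Ico_subset_Icc_self (hx j hj)

lemma int1 (k : ℤ) :
    (∫ t in Set.Ico (0:ℝ) (2*π), Complex.exp (Complex.I * k * t))
      = if k = 0 then ((2*π : ℝ) : ℂ) else 0 := by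
  by_cases hk : k = 0
  · subst hk
    simp only [Int.cast_zero, mul_zero, zero_mul, Complex.exp_zero, if_true]
    rw [MeasureTheory.setIntegral_const, Real.volume_real_Ico, sub_zero,
      max_eq_left (by positivity)]
    simp [Complex.real_smul]
  · rw [if_neg hk, MeasureTheory.integral_Ico_eq_integral_Ioo,
      ← MeasureTheory.integral_Ioc_eq_integral_Ioo,
      ← intervalIntegral.integral_of_le (by positivity : (0:ℝ) ≤ 2*π)]
    have hc : (Complex.I * (k:ℂ)) ≠ 0 := by
      apply mul_ne_zero Complex.I_ne_zero
      exact_mod_cast hk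
    have heq : ∀ t : ℝ, Complex.exp (Complex.I * k * t) = Complex.exp ((Complex.I * k) * t) :=
      fun t => rfl
    rw [integral_exp_mul_complex hc]
    have h2 : Complex.I * (k:ℂ) * ((2*π : ℝ) : ℂ) = (k : ℂ) * (2 * (π:ℂ) * Complex.I) := by
      push_cast; ring
    rw [h2, Complex.exp_int_mul_two_pi_mul_I]
    simp

lemma integral_eK (k : Fin 3 → ℤ) :
    (∫ x in Box, eK k x) = if k = 0 then (((2*π)^3 : ℝ) : ℂ) else 0 := by
  have hprod : ∀ x : Vec3, eK k x = ∏ j, Complex.exp (Complex.I * k j * x j) := by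
    intro x
    rw [eK, ← Complex.exp_sum]
    congr 1
    rw [Finset.mul_sum]
    apply Finset.sum_congr rfl
    intro j _
    ring
  have hbox : MeasurableSet Box := by
    apply MeasurableSet.univ_pi
    intro j
    exact measurableSet_Ico
  rw [← MeasureTheory.integral_indicator hbox]
  have hind : (Box.indicator fun x => eK k x)
      = fun x : Vec3 => ∏ j, (Set.Ico (0:ℝ) (2*π)).indicator
          (fun t => Complex.exp (Complex.I * k j * t)) (x j) := by
    funext x
    by_cases hx : x ∈ Box
    · rw [Set.indicator_of_mem hx, hprod]
      apply Finset.prod_congr rfl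
      intro j _
      rw [Set.indicator_of_mem (hx j (Set.mem_univ j))]
    · rw [Set.indicator_of_notMem hx]
      symm
      rw [Box, Set.mem_pi] at hx
      push_neg at hx
      obtain ⟨j, _, hj⟩ := hx
      apply Finset.prod_eq_zero (Finset.mem_univ j)
      rw [Set.indicator_of_notMem hj]
  rw [hind]
  rw [MeasureTheory.volume_pi, MeasureTheory.integral_fintype_prod_eq_prod
    (fun j t => (Set.Ico (0:ℝ) (2*π)).indicator
      (fun s => Complex.exp (Complex.I * k j * s)) t)]
  have hfac : ∀ j : Fin 3, (∫ t : ℝ, (Set.Ico (0:ℝ) (2*π)).indicator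
      (fun s => Complex.exp (Complex.I * k j * s)) t)
      = if k j = 0 then ((2*π : ℝ) : ℂ) else 0 := by
    intro j
    rw [MeasureTheory.integral_indicator measurableSet_Ico]
    exact int1 (k j)
  rw [Finset.prod_congr rfl fun j _ => hfac j]
  by_cases hk : k = 0
  · subst hk
    simp only [Pi.zero_apply, if_pos rfl]
    rw [Finset.prod_const]
    push_cast
    norm_num
  · rw [if_neg hk]
    have hex : ∃ j, k j ≠ 0 := by
      by_contra h
      push_neg at h
      exact hk (funext h)
    obtain ⟨j, hj⟩ := hex
    apply Finset.prod_eq_zero (Finset.mem_univ j)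
    rw [if_neg hj]

lemma integral_triple (K : Finset (Fin 3 → ℤ)) (a b d : (Fin 3 → ℤ) → ℂ) :
    (∫ x in Box, (∑ p ∈ K, a p * eK p x) * (∑ q ∈ K, b q * eK q x) * (∑ r ∈ K, d r * eK r x))
      = ∑ p ∈ K, ∑ q ∈ K, ∑ r ∈ K, a p * b q * d r *
          (if p + q + r = 0 then (((2*π)^3 : ℝ) : ℂ) else 0) := by
  have hpt : ∀ x : Vec3,
      (∑ p ∈ K, a p * eK p x) * (∑ q ∈ K, b q * eK q x) * (∑ r ∈ K, d r * eK r x)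
      = ∑ p ∈ K, ∑ q ∈ K, ∑ r ∈ K, a p * b q * d r * eK (p + q + r) x := by
    intro x
    rw [Finset.sum_mul_sum, Finset.sum_mul]
    apply Finset.sum_congr rfl; intro p _
    rw [Finset.sum_mul]
    apply Finset.sum_congr rfl; intro q _
    rw [Finset.mul_sum]
    apply Finset.sum_congr rfl; intro r _
    rw [← eK_mul, ← eK_mul]
    ring
  rw [MeasureTheory.setIntegral_congr_fun (by
      apply MeasurableSet.univ_pi; intro j; exact measurableSet_Ico) (fun x _ => hpt x)]
  rw [MeasureTheory.integral_finset_sum _ (fun p _ => by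
    apply MeasureTheory.integrable_finset_sum
    intro q _
    apply MeasureTheory.integrable_finset_sum
    intro r _
    exact (integrableOn_box (eK_continuous _)).const_mul _)]
  apply Finset.sum_congr rfl; intro p _
  rw [MeasureTheory.integral_finset_sum _ (fun q _ => by
    apply MeasureTheory.integrable_finset_sum
    intro r _
    exact (integrableOn_box (eK_continuous _)).const_mul _)]
  apply Finset.sum_congr rfl; intro q _
  rw [MeasureTheory.integral_finset_sum _ (fun r _ =>
    (integrableOn_box (eK_continuous _)).const_mul _)]
  apply Finset.sum_congr rfl; intro r _
  rw [MeasureTheory.integral_const_mul, integral_eK]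

/-- The generic term in the expansion of the trilinear form. -/
def trm (c : Coef) (i j : Fin 3) (p q r : Fin 3 → ℤ) : ℂ :=
  c p j * pd j c q i * c r i * (if p + q + r = 0 then (((2*π)^3 : ℝ) : ℂ) else 0)

lemma sum_trm_j (c : Coef) (hdf : ∀ k, ∑ j, (k j : ℂ) * c k j = 0) (i : Fin 3)
    (p q r : Fin 3 → ℤ) :
    (∑ j, (trm c i j p q r + trm c i j p r q)) = 0 := by
  by_cases hpqr : p + q + r = 0
  · have hprq : p + r + q = 0 := by rw [add_right_comm]; exact hpqr
    have hqr : ∀ j : Fin 3, (q j : ℂ) + (r j : ℂ) = -((p j : ℂ)) := by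
      intro j
      have h := congrFun hpqr j
      simp only [Pi.add_apply, Pi.zero_apply] at h
      have h2 : q j + r j = -(p j) := by omega
      exact_mod_cast congrArg (Int.cast : ℤ → ℂ) h2
    calc (∑ j, (trm c i j p q r + trm c i j p r q))
        = ∑ j, (-(Complex.I) * (((2*π)^3 : ℝ) : ℂ) * (c q i * c r i)) * ((p j : ℂ) * c p j) := by
          apply Finset.sum_congr rfl
          intro j _
          rw [trm, trm, pd, pd, if_pos hpqr, if_pos hprq]
          linear_combination (Complex.I * (((2*π)^3 : ℝ) : ℂ) * (c q i * c r i) * c p j) * hqr j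
      _ = (-(Complex.I) * (((2*π)^3 : ℝ) : ℂ) * (c q i * c r i)) * ∑ j, (p j : ℂ) * c p j := by
          rw [Finset.mul_sum]
      _ = 0 := by rw [hdf p, mul_zero]
  · have hprq : p + r + q ≠ 0 := by
      intro h
      apply hpqr
      rw [add_right_comm] at h
      exact h
    simp [trm, if_neg hpqr, if_neg hprq]

lemma reorder_j (K : Finset (Fin 3 → ℤ)) (f : Fin 3 → (Fin 3 → ℤ) → (Fin 3 → ℤ) → (Fin 3 → ℤ) → ℂ) :
    (∑ j, ∑ p ∈ K, ∑ q ∈ K, ∑ r ∈ K, f j p q r)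
      = ∑ p ∈ K, ∑ q ∈ K, ∑ r ∈ K, ∑ j, f j p q r :=
  calc (∑ j, ∑ p ∈ K, ∑ q ∈ K, ∑ r ∈ K, f j p q r)
      = ∑ p ∈ K, ∑ j, ∑ q ∈ K, ∑ r ∈ K, f j p q r := Finset.sum_comm
    _ = ∑ p ∈ K, ∑ q ∈ K, ∑ j, ∑ r ∈ K, f j p q r :=
        Finset.sum_congr rfl fun p _ => Finset.sum_comm
    _ = ∑ p ∈ K, ∑ q ∈ K, ∑ r ∈ K, ∑ j, f j p q r :=
        Finset.sum_congr rfl fun p _ => Finset.sum_congr rfl fun q _ => Finset.sum_comm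

lemma sum_trm_zero (K : Finset (Fin 3 → ℤ)) (c : Coef)
    (hdf : ∀ k, ∑ j, (k j : ℂ) * c k j = 0) (i : Fin 3) :
    (∑ p ∈ K, ∑ q ∈ K, ∑ r ∈ K, ∑ j, trm c i j p q r) = 0 := by
  have hswap : (∑ p ∈ K, ∑ q ∈ K, ∑ r ∈ K, ∑ j, trm c i j p q r)
      = ∑ p ∈ K, ∑ q ∈ K, ∑ r ∈ K, ∑ j, trm c i j p r q :=
    Finset.sum_congr rfl fun p _ => Finset.sum_comm
  have hdouble : (∑ p ∈ K, ∑ q ∈ K, ∑ r ∈ K, ∑ j, trm c i j p q r)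
      + (∑ p ∈ K, ∑ q ∈ K, ∑ r ∈ K, ∑ j, trm c i j p q r) = 0 := by
    nth_rewrite 2 [hswap]
    rw [← Finset.sum_add_distrib]
    apply Finset.sum_eq_zero
    intro p _
    rw [← Finset.sum_add_distrib]
    apply Finset.sum_eq_zero
    intro q _
    rw [← Finset.sum_add_distrib]
    apply Finset.sum_eq_zero
    intro r _
    rw [← Finset.sum_add_distrib]
    exact sum_trm_j c hdf i p q r
  exact add_self_eq_zero.mp hdouble

lemma nlF_self {n : ℕ} {c : Coef} (hdf : ∀ k, ∑ j, (k j : ℂ) * c k j = 0)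
    (hr : ∀ k i, c (-k) i = starRingEnd ℂ (c k i)) (hs : SuppN n c) :
    nlF c c = 0 := by
  have hr' : ∀ (j : Fin 3) k i, (pd j c) (-k) i = starRingEnd ℂ ((pd j c) k i) := by
    intro j k i
    simp only [pd, hr, map_mul, Complex.conj_I, Pi.neg_apply, Int.cast_neg, map_intCast]
    ring
  have hpd_eq : ∀ (j : Fin 3) (x : Vec3) (i : Fin 3),
      ((realize (pd j c) x i : ℝ) : ℂ) = ∑ k ∈ Kn n, pd j c k i * eK k x :=
    fun j => realize_eq (suppN_pd hs j) (hr' j)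
  have hc_eq : ∀ (x : Vec3) (i : Fin 3),
      ((realize c x i : ℝ) : ℂ) = ∑ k ∈ Kn n, c k i * eK k x := realize_eq hs hr
  have key : ∀ x : Vec3,
      ((∑ i, (∑ j, realize c x j * realize (pd j c) x i) * realize c x i : ℝ) : ℂ)
        = ∑ i, ∑ j, (∑ p ∈ Kn n, c p j * eK p x) * (∑ q ∈ Kn n, pd j c q i * eK q x)
            * (∑ r ∈ Kn n, c r i * eK r x) := by
    intro x
    push_cast
    simp only [hc_eq, hpd_eq, Finset.sum_mul]
  have hbox : MeasurableSet Box := by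
    apply MeasurableSet.univ_pi; intro j; exact measurableSet_Ico
  have hcS : ∀ (f : (Fin 3 → ℤ) → ℂ), Continuous fun x : Vec3 => ∑ k ∈ Kn n, f k * eK k x :=
    fun f => continuous_finset_sum _ fun k _ => continuous_const.mul (eK_continuous k)
  have hofreal : ((nlF c c : ℝ) : ℂ)
      = ∫ x in Box, ((∑ i, (∑ j, realize c x j * realize (pd j c) x i)
          * realize c x i : ℝ) : ℂ) := by
    rw [nlF]
    exact integral_ofReal.symm
  have hcomplex : ((nlF c c : ℝ) : ℂ)
      = ∑ i, ∑ j, ∑ p ∈ Kn n, ∑ q ∈ Kn n, ∑ r ∈ Kn n, trm c i j p q r := by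
    rw [hofreal, MeasureTheory.setIntegral_congr_fun hbox (fun x _ => key x)]
    rw [MeasureTheory.integral_finset_sum _ (fun i _ => by
      apply MeasureTheory.integrable_finset_sum
      intro j _
      exact integrableOn_box (((hcS _).mul (hcS _)).mul (hcS _)))]
    apply Finset.sum_congr rfl; intro i _
    rw [MeasureTheory.integral_finset_sum _ (fun j _ => by
      exact integrableOn_box (((hcS _).mul (hcS _)).mul (hcS _)))]
    apply Finset.sum_congr rfl; intro j _
    exact integral_triple (Kn n) _ _ _
  have hzero : ((nlF c c : ℝ) : ℂ) = 0 := by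
    rw [hcomplex]
    apply Finset.sum_eq_zero
    intro i _
    rw [reorder_j]
    exact sum_trm_zero (Kn n) c hdf i
  exact_mod_cast hzero


/-! ### Projection bounds and the discrete energy step -/

lemma normSq_sum_nonneg (c : Coef) (k : Fin 3 → ℤ) :
    0 ≤ ∑ i, Complex.normSq (c k i) :=
  Finset.sum_nonneg fun _ _ => Complex.normSq_nonneg _

lemma summable_l2 {c : Coef} (h : MemH2 c) :
    Summable fun k => ∑ i, Complex.normSq (c k i) := by
  apply Summable.of_nonneg_of_le (fun k => normSq_sum_nonneg c k) _ h.2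
  intro k
  have h1 : (0:ℝ) ≤ (kSq k : ℝ) := by exact_mod_cast kSq_nonneg k
  nlinarith [normSq_sum_nonneg c k, mul_nonneg h1 (normSq_sum_nonneg c k),
    mul_nonneg (mul_nonneg h1 h1) (normSq_sum_nonneg c k)]

lemma summable_grad {c : Coef} (h : MemH2 c) :
    Summable fun k => (kSq k : ℝ) * ∑ i, Complex.normSq (c k i) := by
  apply Summable.of_nonneg_of_le _ _ h.2
  · intro k
    have h1 : (0:ℝ) ≤ (kSq k : ℝ) := by exact_mod_cast kSq_nonneg k
    exact mul_nonneg h1 (normSq_sum_nonneg c k)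
  · intro k
    have h1 : (0:ℝ) ≤ (kSq k : ℝ) := by exact_mod_cast kSq_nonneg k
    nlinarith [normSq_sum_nonneg c k, mul_nonneg h1 (normSq_sum_nonneg c k),
      mul_nonneg (mul_nonneg h1 h1) (normSq_sum_nonneg c k)]

lemma projN_term_le (n : ℕ) (c : Coef) (k : Fin 3 → ℤ) :
    ∑ i, Complex.normSq (projN n c k i) ≤ ∑ i, Complex.normSq (c k i) := by
  by_cases h : kSq k ≤ (n:ℤ)^2
  · simp [projN, h]
  · simp only [projN, if_neg h]
    simpa using normSq_sum_nonneg c k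

lemma l2S_projN_le {n : ℕ} {c : Coef} (h : MemH2 c) : l2S (projN n c) ≤ l2S c := by
  rw [l2S, l2S]
  apply mul_le_mul_of_nonneg_left _ (by positivity)
  exact Summable.tsum_le_tsum (fun k => projN_term_le n c k)
    (Summable.of_nonneg_of_le (fun k => normSq_sum_nonneg _ k)
      (fun k => projN_term_le n c k) (summable_l2 h)) (summable_l2 h)

lemma gradS_projN_le {n : ℕ} {c : Coef} (h : MemH2 c) : gradS (projN n c) ≤ gradS c := by
  rw [gradS, gradS]
  apply mul_le_mul_of_nonneg_left _ (by positivity)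
  have hterm : ∀ k, (kSq k : ℝ) * ∑ i, Complex.normSq (projN n c k i)
      ≤ (kSq k : ℝ) * ∑ i, Complex.normSq (c k i) := by
    intro k
    have h1 : (0:ℝ) ≤ (kSq k : ℝ) := by exact_mod_cast kSq_nonneg k
    exact mul_le_mul_of_nonneg_left (projN_term_le n c k) h1
  exact Summable.tsum_le_tsum hterm
    (Summable.of_nonneg_of_le (fun k => by
        have h1 : (0:ℝ) ≤ (kSq k : ℝ) := by exact_mod_cast kSq_nonneg k
        exact mul_nonneg h1 (normSq_sum_nonneg _ k))
      hterm (summable_grad h)) (summable_grad h)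

lemma scheme_step (T α : ℝ) (hT : 0 < T) (n M : ℕ) (hM : 1 ≤ M) (c0 : Coef)
    (u : ℕ → Coef) (hu : Scheme T α n M c0 u)
    (i : ℕ) (h1 : 1 ≤ i) (h2 : i ≤ M) :
    l2S (u i) - l2S (u (i-1)) + l2S (subC (u i) (u (i-1)))
      + α^2 * (gradS (u i) - gradS (u (i-1)) + gradS (subC (u i) (u (i-1))))
      + 2 * (T / (M:ℝ)) * gradS (u i) = 0 := by
  have hM0 : (0:ℝ) < M := by exact_mod_cast hM
  set κ := T / (M:ℝ) with hκdef
  have hκ : κ ≠ 0 := ne_of_gt (div_pos hT hM0)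
  obtain ⟨hVn, heq⟩ := hu.2 i h1 h2
  have hE := heq (u i) hVn
  have hnl : nlF (u i) (u i) = 0 :=
    nlF_self hVn.1.divFree hVn.1.reality (suppN_of_memVn hVn)
  have hsupp_i : SuppN n (u i) := suppN_of_memVn hVn
  have hsupp_prev : SuppN n (u (i-1)) := by
    rcases Nat.lt_or_ge (i-1) 1 with h | h
    · have h0 : i - 1 = 0 := by omega
      rw [h0, hu.1]
      exact suppN_projN n c0
    · exact suppN_of_memVn (hu.2 (i-1) h (by omega)).1
  rw [ipS_dtc _ hκ, gipS_dtc _ hκ, gipS_self, hnl] at hE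
  have h3 : ipS (subC (u i) (u (i-1))) (u i)
      + α^2 * gipS (subC (u i) (u (i-1))) (u i)
      + κ * gradS (u i) = 0 := by
    field_simp at hE
    linear_combination hE
  have hp1 := ipS_pol hsupp_i hsupp_prev
  have hp2 := gipS_pol hsupp_i hsupp_prev
  linear_combination 2 * h3 - hp1 - α^2 * hp2

end DEE

/-- Lemma 3.1, discrete energy equality.
For a solution of the Euler–Fourier–Galerkin scheme one has, for all `M` and
all `m = 1,…,M`,
`‖u^m‖₂² + Σ_{i=1}^m ‖u^i−u^{i-1}‖₂² + 2κ Σ_{i=1}^m ‖∇u^i‖₂² + α²‖∇u^m‖₂²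
  + α² Σ_{i=1}^m ‖∇u^i−∇u^{i-1}‖₂² = ‖P_n u₀‖₂² + α²‖∇P_n u₀‖₂²
  ≤ ‖u₀‖₂² + α²‖∇u₀‖₂²`. -/
theorem discrete_energy_equality
    (T : ℝ) (hT : 0 < T) (α : ℝ) (hα : 0 < α) (n M : ℕ) (hM : 1 ≤ M)
    (c0 : Coef) (h0 : MemH2 c0) (u : ℕ → Coef) (hu : Scheme T α n M c0 u)
    (m : ℕ) (hm1 : 1 ≤ m) (hmM : m ≤ M) :
    (l2S (u m) + (∑ i ∈ Finset.Icc 1 m, l2S (subC (u i) (u (i - 1))))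
        + 2 * (T / (M : ℝ)) * (∑ i ∈ Finset.Icc 1 m, gradS (u i))
        + α ^ 2 * gradS (u m)
        + α ^ 2 * (∑ i ∈ Finset.Icc 1 m, gradS (subC (u i) (u (i - 1))))
      = l2S (projN n c0) + α ^ 2 * gradS (projN n c0)) ∧
    (l2S (u m) + (∑ i ∈ Finset.Icc 1 m, l2S (subC (u i) (u (i - 1))))
        + 2 * (T / (M : ℝ)) * (∑ i ∈ Finset.Icc 1 m, gradS (u i))
        + α ^ 2 * gradS (u m)
        + α ^ 2 * (∑ i ∈ Finset.Icc 1 m, gradS (subC (u i) (u (i - 1))))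
      ≤ l2S c0 + α ^ 2 * gradS c0) := by
  have key : ∀ m : ℕ, m ≤ M →
      l2S (u m) + (∑ i ∈ Finset.Icc 1 m, l2S (subC (u i) (u (i - 1))))
        + 2 * (T / (M : ℝ)) * (∑ i ∈ Finset.Icc 1 m, gradS (u i))
        + α ^ 2 * gradS (u m)
        + α ^ 2 * (∑ i ∈ Finset.Icc 1 m, gradS (subC (u i) (u (i - 1))))
        = l2S (u 0) + α ^ 2 * gradS (u 0) := by
    intro m
    induction m with
    | zero =>
      intro _
      simp only [Finset.Icc_self, Finset.Icc_eq_empty_of_lt (by omega : (1:ℕ) > 0),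
        Finset.sum_empty]
      ring
    | succ m ih =>
      intro hm
      have hstep := DEE.scheme_step T α hT n M hM c0 u hu (m+1) (by omega) hm
      have hIH := ih (by omega)
      rw [Finset.sum_Icc_succ_top (by omega : 1 ≤ m+1),
          Finset.sum_Icc_succ_top (by omega : 1 ≤ m+1),
          Finset.sum_Icc_succ_top (by omega : 1 ≤ m+1)]
      simp only [Nat.add_sub_cancel] at hstep ⊢
      linarith [hstep, hIH]
  have he := key m hmM
  rw [hu.1] at he
  refine ⟨he, ?_⟩
  rw [he]
  have h1 := DEE.l2S_projN_le (n := n) h0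
  have h2 := DEE.gradS_projN_le (n := n) h0
  have h3 := mul_le_mul_of_nonneg_left h2 (sq_nonneg α)
  linarith
end
end

section
/- Let u₀ ∈ H²_{0,σ}(T³), α ∈ (0,1], and let u_n^{α,M}(t) and v_n^{α,M}(t) be the piecewise-constant and piecewise-linear time interpolants of a solution of the Euler–Fourier–Galerkin scheme. Then there exists c > 0, independent of α, M and n, such that: ess sup_{t∈(0,T)} ‖v_n^{α,M}(t)‖₂ + ‖v_n^{α,M}‖_{L²(0,T;H¹(T³))} ≤ c, ess sup_{t∈(0,T)} ‖u_n^{α,M}(t)‖₂ + ‖u_n^{α,M}‖_{L²(0,T;H¹(T³))} ≤ c, and α ‖∇v_n^{α,M}‖_{L²(0,T;L²(T³))} ≤ c. -/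
/-!
Common framework: the 3-torus `𝕋³ = ℝ³ / 2πℤ³` is modelled by `2π`-periodic
functions on `ℝ³`; space integrals are taken over the fundamental domain
`Box = [0,2π)³`.  Vector fields are described through their Fourier
coefficients `c : (Fin 3 → ℤ) → Fin 3 → ℂ` (with reality, zero-mean and
divergence-free constraints), realized as functions via `u(x) = Σ_k c_k e^{ik·x}`.
`L²`-type norms of such fields are expressed through Parseval's identity.
-/

noncomputable section

open MeasureTheory Filter Real

/-! ### Auxiliary development -/

namespace EFG

lemma kSq_nonneg (k : Fin 3 → ℤ) : 0 ≤ kSq k :=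
  Finset.sum_nonneg fun _ _ => sq_nonneg _

lemma kSqR_nonneg (k : Fin 3 → ℤ) : (0:ℝ) ≤ (kSq k : ℝ) := by
  exact_mod_cast kSq_nonneg k

lemma P3_pos : (0:ℝ) < (2 * π) ^ 3 := by positivity

/-- The cube of frequencies `|k_j| ≤ n`. -/
def cube (n : ℕ) : Finset (Fin 3 → ℤ) :=
  Finset.Icc (fun _ => -(n:ℤ)) (fun _ => (n:ℤ))

lemma mem_cube_of_kSq {n : ℕ} {k : Fin 3 → ℤ} (h : kSq k ≤ (n:ℤ)^2) : k ∈ cube n := by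
  simp only [cube, Finset.mem_Icc, Pi.le_def]
  have hj : ∀ j, (k j)^2 ≤ (n:ℤ)^2 := by
    intro j
    refine le_trans ?_ h
    exact Finset.single_le_sum (f := fun j => (k j)^2) (fun _ _ => sq_nonneg _)
      (Finset.mem_univ j)
  constructor
  · intro j
    exact (abs_le_of_sq_le_sq' (hj j) (by positivity)).1
  · intro j
    exact (abs_le_of_sq_le_sq' (hj j) (by positivity)).2

lemma neg_mem_cube {n : ℕ} {k : Fin 3 → ℤ} (h : k ∈ cube n) : -k ∈ cube n := by
  simp only [cube, Finset.mem_Icc, Pi.le_def, Pi.neg_apply] at h ⊢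
  constructor
  · intro j; have := h.2 j; omega
  · intro j; have := h.1 j; omega

/-- `c` is supported in the cube of size `n`. -/
def Supp (n : ℕ) (c : Coef) : Prop := ∀ k, k ∉ cube n → ∀ i, c k i = 0

lemma kSq_gt_of_not_mem_cube {n : ℕ} {k : Fin 3 → ℤ} (h : k ∉ cube n) :
    (n:ℤ)^2 < kSq k := by
  by_contra hc
  exact h (mem_cube_of_kSq (le_of_not_gt hc))

lemma supp_of_memVn {n : ℕ} {c : Coef} (h : MemVn n c) : Supp n c :=
  fun k hk i => h.2 k (kSq_gt_of_not_mem_cube hk) i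

lemma supp_projN {n : ℕ} (c0 : Coef) : Supp n (projN n c0) := by
  intro k hk i
  rw [projN, if_neg (not_le.2 (kSq_gt_of_not_mem_cube hk))]

lemma supp_pd {n : ℕ} {c : Coef} (h : Supp n c) (j : Fin 3) : Supp n (pd j c) := by
  intro k hk i
  rw [pd, h k hk i, mul_zero]

/-! #### Finite sum forms of the Parseval expressions -/

lemma l2S_eq_sum {n : ℕ} {c : Coef} (h : Supp n c) :
    l2S c = (2 * π) ^ 3 * ∑ k ∈ cube n, ∑ i, Complex.normSq (c k i) := by
  rw [l2S]
  congr 1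
  refine tsum_eq_sum fun k hk => ?_
  simp [h k hk]

lemma gradS_eq_sum {n : ℕ} {c : Coef} (h : Supp n c) :
    gradS c = (2 * π) ^ 3 * ∑ k ∈ cube n, (kSq k : ℝ) * ∑ i, Complex.normSq (c k i) := by
  rw [gradS]
  congr 1
  refine tsum_eq_sum fun k hk => ?_
  simp [h k hk]

lemma ipS_eq_sum {n : ℕ} {c : Coef} (h : Supp n c) (d : Coef) :
    ipS c d = (2 * π) ^ 3 * ∑ k ∈ cube n, ∑ i, (c k i * starRingEnd ℂ (d k i)).re := by
  rw [ipS]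
  congr 1
  refine tsum_eq_sum fun k hk => ?_
  simp [h k hk]

lemma gipS_eq_sum {n : ℕ} {c : Coef} (h : Supp n c) (d : Coef) :
    gipS c d = (2 * π) ^ 3 * ∑ k ∈ cube n, (kSq k : ℝ) *
      ∑ i, (c k i * starRingEnd ℂ (d k i)).re := by
  rw [gipS]
  congr 1
  refine tsum_eq_sum fun k hk => ?_
  simp [h k hk]

lemma l2S_nonneg (c : Coef) : 0 ≤ l2S c := by
  refine mul_nonneg P3_pos.le (tsum_nonneg fun k => ?_)
  exact Finset.sum_nonneg fun i _ => Complex.normSq_nonneg _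

lemma gradS_nonneg (c : Coef) : 0 ≤ gradS c := by
  refine mul_nonneg P3_pos.le (tsum_nonneg fun k => ?_)
  exact mul_nonneg (kSqR_nonneg k) (Finset.sum_nonneg fun i _ => Complex.normSq_nonneg _)

lemma gipS_self (c : Coef) : gipS c c = gradS c := by
  rw [gipS, gradS]
  congr 1
  refine tsum_congr fun k => ?_
  congr 1
  refine Finset.sum_congr rfl fun i _ => ?_
  rw [Complex.mul_conj]
  simp

/-! #### Coercivity of the discrete time derivative -/

lemma re_mul_conj_le (a b : ℂ) :
    (b * starRingEnd ℂ a).re ≤ (Complex.normSq a + Complex.normSq b) / 2 := by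
  have h1 : (b * starRingEnd ℂ a).re ≤ ‖b * starRingEnd ℂ a‖ :=
    Complex.re_le_norm _
  rw [norm_mul, Complex.norm_conj] at h1
  have h2 : ‖b‖ * ‖a‖ ≤ (Complex.normSq a + Complex.normSq b) / 2 := by
    rw [← Complex.sq_norm, ← Complex.sq_norm]
    nlinarith [sq_nonneg (‖a‖ - ‖b‖)]
  linarith

lemma dtc_term_ge (κ : ℝ) (hκ : 0 < κ) (a b : ℂ) :
    Complex.normSq a - Complex.normSq b ≤ ((a - b) / (κ:ℂ) * starRingEnd ℂ a).re * (2 * κ) := by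
  have h : (a - b) / (κ:ℂ) * starRingEnd ℂ a = ((a - b) * starRingEnd ℂ a) / (κ:ℂ) := by
    ring
  rw [h, Complex.div_ofReal_re]
  have h2 : ((a - b) * starRingEnd ℂ a).re = Complex.normSq a - (b * starRingEnd ℂ a).re := by
    rw [sub_mul, Complex.sub_re, Complex.mul_conj]
    simp
  rw [h2]
  have h3 := re_mul_conj_le a b
  rw [div_mul_eq_mul_div, le_div_iff₀ hκ]
  nlinarith

lemma ipS_dtc_ge {n : ℕ} {a b : Coef} (ha : Supp n a) (hb : Supp n b)
    {κ : ℝ} (hκ : 0 < κ) :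
    (l2S a - l2S b) / (2 * κ) ≤ ipS (dtc κ a b) a := by
  have hd : Supp n (dtc κ a b) := by
    intro k hk i
    rw [dtc, ha k hk i, hb k hk i, sub_zero, zero_div]
  rw [ipS_eq_sum hd, l2S_eq_sum ha, l2S_eq_sum hb]
  have hsum : (∑ k ∈ cube n, ∑ i, Complex.normSq (a k i))
      - (∑ k ∈ cube n, ∑ i, Complex.normSq (b k i))
      ≤ (∑ k ∈ cube n, ∑ i, (dtc κ a b k i * starRingEnd ℂ (a k i)).re) * (2 * κ) := by
    rw [← Finset.sum_sub_distrib, Finset.sum_mul]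
    refine Finset.sum_le_sum fun k _ => ?_
    rw [← Finset.sum_sub_distrib, Finset.sum_mul]
    refine Finset.sum_le_sum fun i _ => ?_
    exact dtc_term_ge κ hκ _ _
  rw [div_le_iff₀ (by positivity)]
  nlinarith [P3_pos]

lemma gipS_dtc_ge {n : ℕ} {a b : Coef} (ha : Supp n a) (hb : Supp n b)
    {κ : ℝ} (hκ : 0 < κ) :
    (gradS a - gradS b) / (2 * κ) ≤ gipS (dtc κ a b) a := by
  have hd : Supp n (dtc κ a b) := by
    intro k hk i
    rw [dtc, ha k hk i, hb k hk i, sub_zero, zero_div]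
  rw [gipS_eq_sum hd, gradS_eq_sum ha, gradS_eq_sum hb]
  have hsum : (∑ k ∈ cube n, (kSq k : ℝ) * ∑ i, Complex.normSq (a k i))
      - (∑ k ∈ cube n, (kSq k : ℝ) * ∑ i, Complex.normSq (b k i))
      ≤ (∑ k ∈ cube n, (kSq k : ℝ) *
          ∑ i, (dtc κ a b k i * starRingEnd ℂ (a k i)).re) * (2 * κ) := by
    rw [← Finset.sum_sub_distrib, Finset.sum_mul]
    refine Finset.sum_le_sum fun k _ => ?_
    rw [← mul_sub, mul_assoc]
    refine mul_le_mul_of_nonneg_left ?_ (kSqR_nonneg k)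
    rw [← Finset.sum_sub_distrib, Finset.sum_mul]
    refine Finset.sum_le_sum fun i _ => ?_
    exact dtc_term_ge κ hκ _ _
  rw [div_le_iff₀ (by positivity)]
  nlinarith [P3_pos]

/-! #### Interpolation bounds -/

lemma interp_term_le (θ : ℝ) (hθ : 0 ≤ θ) (hθ1 : θ ≤ 1) (x y : ℂ) :
    Complex.normSq (x + (θ:ℂ) * (y - x)) ≤ 8 * Complex.normSq x + 2 * Complex.normSq y := by
  have h1 : ‖x + (θ:ℂ) * (y - x)‖ ≤ 2 * ‖x‖ + ‖y‖ := by
    calc ‖x + (θ:ℂ) * (y - x)‖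
        ≤ ‖x‖ + ‖(θ:ℂ) * (y - x)‖ := norm_add_le _ _
      _ = ‖x‖ + θ * ‖y - x‖ := by
          rw [norm_mul, Complex.norm_of_nonneg hθ]
      _ ≤ ‖x‖ + 1 * (‖y‖ + ‖x‖) := by
          have h0 : ‖y - x‖ ≤ ‖y‖ + ‖x‖ :=
            norm_sub_le y x
          have hθ' : θ * ‖y - x‖ ≤ 1 * (‖y‖ + ‖x‖) :=
            mul_le_mul hθ1 h0 (norm_nonneg _) zero_le_one
          linarith
      _ = 2 * ‖x‖ + ‖y‖ := by ring
  have h2 : ‖x + (θ:ℂ) * (y - x)‖ ^ 2 ≤ (2 * ‖x‖ + ‖y‖) ^ 2 :=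
    pow_le_pow_left₀ (norm_nonneg _) h1 2
  rw [← Complex.sq_norm, ← Complex.sq_norm, ← Complex.sq_norm]
  nlinarith [sq_nonneg (2 * ‖x‖ - ‖y‖)]

lemma l2S_interp_le {n : ℕ} {a b : Coef} (ha : Supp n a) (hb : Supp n b)
    (θ : ℝ) (hθ : 0 ≤ θ) (hθ1 : θ ≤ 1) :
    l2S (fun k i => a k i + (θ:ℂ) * (b k i - a k i)) ≤ 8 * l2S a + 2 * l2S b := by
  have hc : Supp n (fun k i => a k i + (θ:ℂ) * (b k i - a k i)) := by
    intro k hk i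
    simp [ha k hk i, hb k hk i]
  rw [l2S_eq_sum hc, l2S_eq_sum ha, l2S_eq_sum hb]
  have hsum : (∑ k ∈ cube n, ∑ i, Complex.normSq (a k i + (θ:ℂ) * (b k i - a k i)))
      ≤ 8 * (∑ k ∈ cube n, ∑ i, Complex.normSq (a k i))
        + 2 * (∑ k ∈ cube n, ∑ i, Complex.normSq (b k i)) := by
    rw [Finset.mul_sum, Finset.mul_sum, ← Finset.sum_add_distrib]
    refine Finset.sum_le_sum fun k _ => ?_
    rw [Finset.mul_sum, Finset.mul_sum, ← Finset.sum_add_distrib]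
    refine Finset.sum_le_sum fun i _ => ?_
    exact interp_term_le θ hθ hθ1 _ _
  nlinarith [P3_pos]

lemma gradS_interp_le {n : ℕ} {a b : Coef} (ha : Supp n a) (hb : Supp n b)
    (θ : ℝ) (hθ : 0 ≤ θ) (hθ1 : θ ≤ 1) :
    gradS (fun k i => a k i + (θ:ℂ) * (b k i - a k i)) ≤ 8 * gradS a + 2 * gradS b := by
  have hc : Supp n (fun k i => a k i + (θ:ℂ) * (b k i - a k i)) := by
    intro k hk i
    simp [ha k hk i, hb k hk i]
  rw [gradS_eq_sum hc, gradS_eq_sum ha, gradS_eq_sum hb]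
  have hsum : (∑ k ∈ cube n, (kSq k : ℝ) * ∑ i, Complex.normSq (a k i + (θ:ℂ) * (b k i - a k i)))
      ≤ 8 * (∑ k ∈ cube n, (kSq k : ℝ) * ∑ i, Complex.normSq (a k i))
        + 2 * (∑ k ∈ cube n, (kSq k : ℝ) * ∑ i, Complex.normSq (b k i)) := by
    rw [Finset.mul_sum, Finset.mul_sum, ← Finset.sum_add_distrib]
    refine Finset.sum_le_sum fun k _ => ?_
    have hin : (∑ i, Complex.normSq (a k i + (θ:ℂ) * (b k i - a k i)))
        ≤ 8 * (∑ i, Complex.normSq (a k i)) + 2 * (∑ i, Complex.normSq (b k i)) := by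
      rw [Finset.mul_sum, Finset.mul_sum, ← Finset.sum_add_distrib]
      refine Finset.sum_le_sum fun i _ => ?_
      exact interp_term_le θ hθ hθ1 _ _
    have := mul_le_mul_of_nonneg_left hin (kSqR_nonneg k)
    nlinarith
  nlinarith [P3_pos]

/-! #### Bounds on the projected initial datum -/

/-- The `H²`-type quantity controlling all the estimates. -/
def H2B (c0 : Coef) : ℝ :=
  (2 * π) ^ 3 * ∑' k, (1 + (kSq k : ℝ)) ^ 2 * ∑ i, Complex.normSq (c0 k i)

lemma H2B_nonneg (c0 : Coef) : 0 ≤ H2B c0 := by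
  refine mul_nonneg P3_pos.le (tsum_nonneg fun k => ?_)
  exact mul_nonneg (by positivity) (Finset.sum_nonneg fun i _ => Complex.normSq_nonneg _)

lemma l2S_projN_le {c0 : Coef} (h0 : MemH2 c0) (n : ℕ) : l2S (projN n c0) ≤ H2B c0 := by
  rw [l2S_eq_sum (supp_projN c0), H2B]
  refine mul_le_mul_of_nonneg_left ?_ P3_pos.le
  refine le_trans (Finset.sum_le_sum fun k _ => ?_) (Summable.sum_le_tsum (cube n)
    (fun k _ => mul_nonneg (by positivity)
      (Finset.sum_nonneg fun i _ => Complex.normSq_nonneg _)) h0.2)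
  have h1 : (1:ℝ) ≤ (1 + (kSq k : ℝ)) ^ 2 := by nlinarith [kSqR_nonneg k]
  have h2 : ∑ i, Complex.normSq (projN n c0 k i) ≤ ∑ i, Complex.normSq (c0 k i) := by
    refine Finset.sum_le_sum fun i _ => ?_
    rw [projN]
    split
    · exact le_refl _
    · simpa using Complex.normSq_nonneg (c0 k i)
  calc ∑ i, Complex.normSq (projN n c0 k i) ≤ ∑ i, Complex.normSq (c0 k i) := h2
    _ ≤ (1 + (kSq k : ℝ)) ^ 2 * ∑ i, Complex.normSq (c0 k i) := by
        nlinarith [Finset.sum_nonneg (fun i (_ : i ∈ Finset.univ) => Complex.normSq_nonneg (c0 k i))]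

lemma gradS_projN_le {c0 : Coef} (h0 : MemH2 c0) (n : ℕ) : gradS (projN n c0) ≤ H2B c0 := by
  rw [gradS_eq_sum (supp_projN c0), H2B]
  refine mul_le_mul_of_nonneg_left ?_ P3_pos.le
  refine le_trans (Finset.sum_le_sum fun k _ => ?_) (Summable.sum_le_tsum (cube n)
    (fun k _ => mul_nonneg (by positivity)
      (Finset.sum_nonneg fun i _ => Complex.normSq_nonneg _)) h0.2)
  have h2 : ∑ i, Complex.normSq (projN n c0 k i) ≤ ∑ i, Complex.normSq (c0 k i) := by
    refine Finset.sum_le_sum fun i _ => ?_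
    rw [projN]
    split
    · exact le_refl _
    · simpa using Complex.normSq_nonneg (c0 k i)
  have h1 : (kSq k : ℝ) ≤ (1 + (kSq k : ℝ)) ^ 2 := by nlinarith [kSqR_nonneg k]
  have h3 : (0:ℝ) ≤ ∑ i, Complex.normSq (projN n c0 k i) :=
    Finset.sum_nonneg fun i _ => Complex.normSq_nonneg _
  have h4 : (0:ℝ) ≤ ∑ i, Complex.normSq (c0 k i) :=
    Finset.sum_nonneg fun i _ => Complex.normSq_nonneg _
  nlinarith [kSqR_nonneg k]

/-! #### Step-function integrals -/

lemma floor_toNat_eq {κ : ℝ} (hκ : 0 < κ) (N : ℕ) {t : ℝ}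
    (h1 : (N:ℝ) * κ ≤ t) (h2 : t < ((N:ℝ) + 1) * κ) :
    (Int.floor (t / κ)).toNat = N := by
  have hf : Int.floor (t / κ) = (N : ℤ) := by
    rw [Int.floor_eq_iff]
    constructor
    · rw [le_div_iff₀ hκ]; exact_mod_cast h1
    · rw [div_lt_iff₀ hκ]; push_cast; exact_mod_cast h2
  rw [hf]
  exact Int.toNat_natCast N

/-- Integral of a step function over `[0, Nκ)`. -/
lemma step_integral_Ico {κ : ℝ} (hκ : 0 < κ) (φ : ℕ → ℝ) (N : ℕ) :
    IntegrableOn (fun t => φ (Int.floor (t / κ)).toNat) (Set.Ico 0 ((N:ℝ) * κ)) volume ∧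
    ∫ t in Set.Ico 0 ((N:ℝ) * κ), φ (Int.floor (t / κ)).toNat
      = ∑ m ∈ Finset.range N, κ * φ m := by
  induction N with
  | zero => simp
  | succ N ih =>
    have hle : (0:ℝ) ≤ (N:ℝ) * κ := by positivity
    have hle2 : (N:ℝ) * κ ≤ ((N:ℕ)+1 : ℕ) * κ := by
      push_cast
      nlinarith
    have hunion : Set.Ico (0:ℝ) ((N:ℝ) * κ) ∪ Set.Ico ((N:ℝ) * κ) (((N:ℕ)+1 : ℕ) * κ)
        = Set.Ico (0:ℝ) (((N:ℕ)+1 : ℕ) * κ) := Set.Ico_union_Ico_eq_Ico hle hle2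
    have heq : Set.EqOn (fun t => φ (Int.floor (t / κ)).toNat) (fun _ => φ N)
        (Set.Ico ((N:ℝ) * κ) (((N:ℕ)+1 : ℕ) * κ)) := by
      intro t ht
      simp only
      rw [floor_toNat_eq hκ N ht.1 (by push_cast at ht ⊢; linarith [ht.2])]
    have hint2 : IntegrableOn (fun t => φ (Int.floor (t / κ)).toNat)
        (Set.Ico ((N:ℝ) * κ) (((N:ℕ)+1 : ℕ) * κ)) volume := by
      refine (integrableOn_congr_fun heq measurableSet_Ico).2 ?_
      exact integrableOn_const (by rw [Real.volume_Ico]; exact ENNReal.ofReal_ne_top)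
    have hval2 : ∫ t in Set.Ico ((N:ℝ) * κ) (((N:ℕ)+1 : ℕ) * κ),
        φ (Int.floor (t / κ)).toNat = κ * φ N := by
      rw [setIntegral_congr_fun measurableSet_Ico heq, setIntegral_const, measureReal_def, Real.volume_Ico,
        ENNReal.toReal_ofReal (by push_cast; nlinarith)]
      rw [smul_eq_mul]
      push_cast
      ring
    constructor
    · rw [← hunion]
      exact (ih.1).union hint2
    · rw [← hunion, setIntegral_union (Set.Ico_disjoint_Ico_same)
        measurableSet_Ico ih.1 hint2, ih.2, hval2, Finset.sum_range_succ]

/-! #### Exponentials: basic properties and orthogonality -/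

lemma eK_add (a b : Fin 3 → ℤ) (x : Vec3) : eK (a + b) x = eK a x * eK b x := by
  rw [eK, eK, eK, ← Complex.exp_add, ← mul_add, ← Finset.sum_add_distrib]
  congr 2
  refine Finset.sum_congr rfl fun j _ => ?_
  have : ((a + b) j : ℂ) = (a j : ℂ) + (b j : ℂ) := by
    simp [Pi.add_apply]
  rw [this]
  ring

lemma continuous_eK (k : Fin 3 → ℤ) : Continuous (eK k) := by
  unfold eK
  refine Complex.continuous_exp.comp ?_
  refine continuous_const.mul ?_
  refine continuous_finset_sum _ fun j _ => ?_
  exact continuous_const.mul (Complex.continuous_ofReal.comp (continuous_apply j))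

lemma abs_eK (k : Fin 3 → ℤ) (x : Vec3) : ‖eK k x‖ = 1 := by
  rw [eK, Complex.norm_exp]
  have h : (Complex.I * ∑ j, (k j : ℂ) * (x j : ℂ)).re = 0 := by
    have hsum : (∑ j, (k j : ℂ) * (x j : ℂ)) = (((∑ j, (k j : ℝ) * x j : ℝ)) : ℂ) := by
      push_cast
      rfl
    rw [hsum]
    simp
  rw [h, Real.exp_zero]

lemma conj_eK (k : Fin 3 → ℤ) (x : Vec3) : starRingEnd ℂ (eK k x) = eK (-k) x := by
  rw [eK, eK, ← Complex.exp_conj]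
  congr 1
  rw [map_mul, Complex.conj_I, map_sum]
  rw [neg_mul, Finset.mul_sum, Finset.mul_sum, ← Finset.sum_neg_distrib]
  refine Finset.sum_congr rfl fun j _ => ?_
  rw [map_mul]
  simp only [Pi.neg_apply, Int.cast_neg, map_intCast, Complex.conj_ofReal]
  ring

lemma measurableSet_Box : MeasurableSet Box :=
  MeasurableSet.univ_pi fun _ => measurableSet_Ico

lemma volume_Box_lt_top : volume Box < ⊤ := by
  rw [Box, volume_pi_pi]
  simp only [Real.volume_Ico, sub_zero]
  rw [Finset.prod_const]
  exact ENNReal.pow_lt_top ENNReal.ofReal_lt_top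

lemma integrableOn_eK (k : Fin 3 → ℤ) : IntegrableOn (eK k) Box volume := by
  refine Integrable.mono' (g := fun _ => (1:ℝ)) ?_ ((continuous_eK k).aestronglyMeasurable) ?_
  · exact integrableOn_const volume_Box_lt_top.ne
  · refine ae_of_all _ fun x => ?_
    rw [abs_eK]

lemma integral_eK (k : Fin 3 → ℤ) :
    ∫ x in Box, eK k x = if k = 0 then (((2 * π : ℝ)) : ℂ) ^ 3 else 0 := by
  have hfact : ∀ x : Vec3, eK k x = ∏ j, Complex.exp (Complex.I * (k j : ℂ) * (x j : ℂ)) := by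
    intro x
    rw [eK, Finset.mul_sum, Complex.exp_sum]
    exact Finset.prod_congr rfl fun j _ => by rw [mul_assoc]
  have hind : ∀ x : Vec3, Box.indicator (fun x => ∏ j, Complex.exp (Complex.I * (k j : ℂ) * (x j : ℂ))) x
      = ∏ j, (Set.Ico (0:ℝ) (2 * π)).indicator
          (fun y => Complex.exp (Complex.I * (k j : ℂ) * (y : ℂ))) (x j) := by
    intro x
    by_cases hx : x ∈ Box
    · rw [Set.indicator_of_mem hx]
      rw [Box, Set.mem_univ_pi] at hx
      refine Finset.prod_congr rfl fun j _ => ?_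
      exact (Set.indicator_of_mem (hx j)
        (fun y : ℝ => Complex.exp (Complex.I * (k j : ℂ) * (y : ℂ)))).symm
    · rw [Set.indicator_of_notMem hx]
      rw [Box, Set.mem_univ_pi] at hx
      push_neg at hx
      obtain ⟨j, hj⟩ := hx
      symm
      exact Finset.prod_eq_zero (Finset.mem_univ j) (Set.indicator_of_notMem hj _)
  have h1 : ∫ x in Box, eK k x
      = ∏ j, ∫ y : ℝ, (Set.Ico (0:ℝ) (2 * π)).indicator
          (fun y => Complex.exp (Complex.I * (k j : ℂ) * (y : ℂ))) y := by
    rw [show (fun x => eK k x) = fun x => ∏ j, Complex.exp (Complex.I * (k j : ℂ) * (x j : ℂ))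
      from funext hfact]
    rw [← MeasureTheory.integral_indicator measurableSet_Box]
    rw [show (fun x => Box.indicator
        (fun x => ∏ j, Complex.exp (Complex.I * (k j : ℂ) * (x j : ℂ))) x)
      = fun x : Vec3 => ∏ j, (Set.Ico (0:ℝ) (2 * π)).indicator
          (fun y => Complex.exp (Complex.I * (k j : ℂ) * (y : ℂ))) (x j) from funext hind]
    exact MeasureTheory.integral_fintype_prod_eq_prod
      (fun j => (Set.Ico (0:ℝ) (2 * π)).indicator
        (fun y => Complex.exp (Complex.I * (k j : ℂ) * (y : ℂ))))
  have h2 : ∀ j, ∫ y : ℝ, (Set.Ico (0:ℝ) (2 * π)).indicator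
      (fun y => Complex.exp (Complex.I * (k j : ℂ) * (y : ℂ))) y
      = ∫ y in (0:ℝ)..(2 * π), Complex.exp (Complex.I * (k j : ℂ) * (y : ℂ)) := by
    intro j
    rw [MeasureTheory.integral_indicator measurableSet_Ico,
      MeasureTheory.integral_Ico_eq_integral_Ioo,
      intervalIntegral.integral_of_le (by positivity : (0:ℝ) ≤ 2 * π),
      MeasureTheory.integral_Ioc_eq_integral_Ioo]
  rw [h1]
  by_cases hk : k = 0
  · subst hk
    rw [Finset.prod_congr rfl fun j _ => h2 j, if_pos rfl]
    have h3 : ∀ j : Fin 3, (∫ y in (0:ℝ)..(2 * π),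
        Complex.exp (Complex.I * ((0 : Fin 3 → ℤ) j : ℂ) * (y : ℂ))) = ((2 * π : ℝ) : ℂ) := by
      intro j
      simp only [Pi.zero_apply, Int.cast_zero, mul_zero, zero_mul, Complex.exp_zero]
      rw [intervalIntegral.integral_const]
      simp
    rw [Finset.prod_congr rfl fun j _ => h3 j]
    simp [Finset.prod_const]
  · rw [if_neg hk]
    obtain ⟨j0, hj0⟩ := Function.ne_iff.1 hk
    refine Finset.prod_eq_zero (Finset.mem_univ j0) ?_
    rw [h2 j0]
    have hc : Complex.I * (k j0 : ℂ) ≠ 0 := by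
      refine mul_ne_zero Complex.I_ne_zero ?_
      exact_mod_cast hj0
    rw [show (fun y : ℝ => Complex.exp (Complex.I * (k j0 : ℂ) * (y : ℂ)))
        = fun y : ℝ => Complex.exp ((Complex.I * (k j0 : ℂ)) * (y : ℂ)) from rfl]
    rw [integral_exp_mul_complex hc]
    have he : Complex.exp (Complex.I * (k j0 : ℂ) * ((2 * π : ℝ) : ℂ)) = 1 := by
      have := Complex.exp_int_mul_two_pi_mul_I (k j0)
      rw [← this]
      congr 1
      push_cast
      ring
    rw [he]
    simp

/-! #### Realization of finitely supported real fields -/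

lemma realize_cast {n : ℕ} {c : Coef} (hS : Supp n c)
    (hre : ∀ k i, c (-k) i = starRingEnd ℂ (c k i)) (x : Vec3) (i : Fin 3) :
    ((realize c x i : ℝ) : ℂ) = ∑ k ∈ cube n, c k i * eK k x := by
  have hsum : (∑' k, c k i * eK k x) = ∑ k ∈ cube n, c k i * eK k x := by
    refine tsum_eq_sum fun k hk => ?_
    rw [hS k hk i, zero_mul]
  have hconj : starRingEnd ℂ (∑ k ∈ cube n, c k i * eK k x)
      = ∑ k ∈ cube n, c k i * eK k x := by
    rw [map_sum]
    have hterm : ∀ k, starRingEnd ℂ (c k i * eK k x) = c (-k) i * eK (-k) x := by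
      intro k
      rw [map_mul, conj_eK, ← hre]
    rw [Finset.sum_congr rfl fun k _ => hterm k]
    refine Finset.sum_equiv (Equiv.neg (Fin 3 → ℤ)) (fun k => ?_) (fun k _ => ?_)
    · exact ⟨fun h => neg_mem_cube h, fun h => by simpa using neg_mem_cube h⟩
    · rfl
  rw [realize, hsum]
  exact Complex.conj_eq_iff_re.mp hconj

lemma sum_reorder5 {α β γ δ ε M : Type*} [AddCommMonoid M]
    (sa : Finset α) (sb : Finset β) (sc : Finset γ) (sd : Finset δ) (se : Finset ε)
    (t : α → β → γ → δ → ε → M) :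
    (∑ i ∈ sa, ∑ j ∈ sb, ∑ k ∈ sc, ∑ m ∈ sd, ∑ l ∈ se, t i j k m l)
      = ∑ k ∈ sc, ∑ m ∈ sd, ∑ l ∈ se, ∑ i ∈ sa, ∑ j ∈ sb, t i j k m l := calc
  (∑ i ∈ sa, ∑ j ∈ sb, ∑ k ∈ sc, ∑ m ∈ sd, ∑ l ∈ se, t i j k m l)
      = ∑ i ∈ sa, ∑ k ∈ sc, ∑ j ∈ sb, ∑ m ∈ sd, ∑ l ∈ se, t i j k m l :=
    Finset.sum_congr rfl fun _ _ => Finset.sum_comm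
  _ = ∑ i ∈ sa, ∑ k ∈ sc, ∑ m ∈ sd, ∑ j ∈ sb, ∑ l ∈ se, t i j k m l :=
    Finset.sum_congr rfl fun _ _ => Finset.sum_congr rfl fun _ _ => Finset.sum_comm
  _ = ∑ i ∈ sa, ∑ k ∈ sc, ∑ m ∈ sd, ∑ l ∈ se, ∑ j ∈ sb, t i j k m l :=
    Finset.sum_congr rfl fun _ _ => Finset.sum_congr rfl fun _ _ =>
      Finset.sum_congr rfl fun _ _ => Finset.sum_comm
  _ = ∑ k ∈ sc, ∑ i ∈ sa, ∑ m ∈ sd, ∑ l ∈ se, ∑ j ∈ sb, t i j k m l := Finset.sum_comm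
  _ = ∑ k ∈ sc, ∑ m ∈ sd, ∑ i ∈ sa, ∑ l ∈ se, ∑ j ∈ sb, t i j k m l :=
    Finset.sum_congr rfl fun _ _ => Finset.sum_comm
  _ = ∑ k ∈ sc, ∑ m ∈ sd, ∑ l ∈ se, ∑ i ∈ sa, ∑ j ∈ sb, t i j k m l :=
    Finset.sum_congr rfl fun _ _ => Finset.sum_congr rfl fun _ _ => Finset.sum_comm

/-- The trilinear term vanishes on divergence-free trigonometric polynomials. -/
lemma nlF_self {n : ℕ} {c : Coef} (h : MemVn n c) : nlF c c = 0 := by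
  have hS : Supp n c := supp_of_memVn h
  obtain ⟨⟨hzm, hre, hdiv⟩, -⟩ := h
  have hpd_re : ∀ (j : Fin 3) (k : Fin 3 → ℤ) (i : Fin 3),
      pd j c (-k) i = starRingEnd ℂ (pd j c k i) := by
    intro j k i
    rw [pd, pd, hre k i]
    simp only [map_mul, Complex.conj_I, map_intCast, Pi.neg_apply, Int.cast_neg]
    ring
  have hcast := realize_cast hS hre
  have hpdcast : ∀ (j : Fin 3) (x : Vec3) (i : Fin 3),
      ((realize (pd j c) x i : ℝ) : ℂ) = ∑ m ∈ cube n, pd j c m i * eK m x :=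
    fun j => realize_cast (supp_pd hS j) (hpd_re j)
  rw [nlF]
  refine Complex.ofReal_eq_zero.mp ?_
  have hOR : (∫ x in Box, ((∑ i, (∑ j, realize c x j * realize (pd j c) x i)
        * realize c x i : ℝ) : ℂ))
      = ((∫ x in Box, (∑ i, (∑ j, realize c x j * realize (pd j c) x i)
        * realize c x i) : ℝ) : ℂ) := integral_ofReal
  rw [← hOR]
  have hpoint : ∀ x ∈ Box,
      ((∑ i, (∑ j, realize c x j * realize (pd j c) x i) * realize c x i : ℝ) : ℂ)
      = ∑ i : Fin 3, ∑ j : Fin 3, ∑ k ∈ cube n, ∑ m ∈ cube n, ∑ l ∈ cube n,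
          (c k j * (Complex.I * ((m j : ℤ) : ℂ)) * c m i * c l i) * eK (k + m + l) x := by
    intro x _
    push_cast
    simp only [hcast x, hpdcast _ x]
    refine Finset.sum_congr rfl fun i _ => ?_
    rw [Finset.sum_mul]
    refine Finset.sum_congr rfl fun j _ => ?_
    rw [Finset.sum_mul_sum, Finset.sum_mul]
    refine Finset.sum_congr rfl fun k _ => ?_
    rw [Finset.sum_mul]
    refine Finset.sum_congr rfl fun m _ => ?_
    rw [Finset.mul_sum]
    refine Finset.sum_congr rfl fun l _ => ?_
    rw [eK_add, eK_add, pd]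
    ring
  rw [setIntegral_congr_fun measurableSet_Box hpoint]
  have hint : ∀ (q : Fin 3 → ℤ) (z : ℂ), IntegrableOn (fun x => z * eK q x) Box volume :=
    fun q z => (integrableOn_eK q).const_mul z
  have hint3 : ∀ (i j : Fin 3), IntegrableOn (fun x => ∑ k ∈ cube n, ∑ m ∈ cube n, ∑ l ∈ cube n,
      (c k j * (Complex.I * ((m j : ℤ) : ℂ)) * c m i * c l i) * eK (k + m + l) x) Box volume :=
    fun i j => integrable_finset_sum _ fun k _ => integrable_finset_sum _ fun m _ =>
      integrable_finset_sum _ fun l _ => hint _ _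
  calc (∫ x in Box, ∑ i : Fin 3, ∑ j : Fin 3, ∑ k ∈ cube n, ∑ m ∈ cube n, ∑ l ∈ cube n,
          (c k j * (Complex.I * ((m j : ℤ) : ℂ)) * c m i * c l i) * eK (k + m + l) x)
      = ∑ i : Fin 3, ∑ j : Fin 3, ∑ k ∈ cube n, ∑ m ∈ cube n, ∑ l ∈ cube n,
          (c k j * (Complex.I * ((m j : ℤ) : ℂ)) * c m i * c l i)
            * ∫ x in Box, eK (k + m + l) x := by
        rw [integral_finset_sum _ (fun i _ => integrable_finset_sum _ fun j _ => hint3 i j)]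
        refine Finset.sum_congr rfl fun i _ => ?_
        rw [integral_finset_sum _ (fun j _ => hint3 i j)]
        refine Finset.sum_congr rfl fun j _ => ?_
        rw [integral_finset_sum _ (fun k _ => integrable_finset_sum _ fun m _ =>
          integrable_finset_sum _ fun l _ => hint _ _)]
        refine Finset.sum_congr rfl fun k _ => ?_
        rw [integral_finset_sum _ (fun m _ => integrable_finset_sum _ fun l _ => hint _ _)]
        refine Finset.sum_congr rfl fun m _ => ?_
        rw [integral_finset_sum _ (fun l _ => hint _ _)]
        refine Finset.sum_congr rfl fun l _ => ?_
        exact integral_const_mul _ _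
    _ = ∑ k ∈ cube n, ∑ m ∈ cube n, ∑ l ∈ cube n, ∑ i : Fin 3, ∑ j : Fin 3,
          (c k j * (Complex.I * ((m j : ℤ) : ℂ)) * c m i * c l i)
            * ∫ x in Box, eK (k + m + l) x :=
        sum_reorder5 _ _ _ _ _ _
    _ = 0 := by
        have hzero : ∀ k m l : Fin 3 → ℤ,
            (∑ i : Fin 3, ∑ j : Fin 3,
              (c k j * (Complex.I * ((m j : ℤ) : ℂ)) * c m i * c l i)
                * ∫ x in Box, eK (k + m + l) x)
            + (∑ i : Fin 3, ∑ j : Fin 3,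
              (c k j * (Complex.I * ((l j : ℤ) : ℂ)) * c l i * c m i)
                * ∫ x in Box, eK (k + l + m) x) = 0 := by
          intro k m l
          by_cases hk0 : k + m + l = 0
          · have hml : k + l + m = 0 := by rwa [add_right_comm] at hk0
            rw [integral_eK, integral_eK, if_pos hk0, if_pos hml]
            have hj : ∀ j : Fin 3, ((m j : ℤ) : ℂ) + ((l j : ℤ) : ℂ) = -((k j : ℤ) : ℂ) := by
              intro j
              have h1 : k j + m j + l j = 0 := by
                have := congrFun hk0 j
                simpa using this
              have h2 : (m j : ℤ) + l j = -(k j) := by omega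
              exact_mod_cast congrArg (fun z : ℤ => (z : ℂ)) h2
            rw [← Finset.sum_add_distrib]
            refine Finset.sum_eq_zero fun i _ => ?_
            rw [← Finset.sum_add_distrib]
            calc (∑ j : Fin 3,
                ((c k j * (Complex.I * ((m j : ℤ) : ℂ)) * c m i * c l i) * ((2 * π : ℝ) : ℂ) ^ 3
                  + (c k j * (Complex.I * ((l j : ℤ) : ℂ)) * c l i * c m i) * ((2 * π : ℝ) : ℂ) ^ 3))
                = ∑ j : Fin 3, ((k j : ℂ) * c k j)
                    * (-(Complex.I) * (c m i * c l i * ((2 * π : ℝ) : ℂ) ^ 3)) := by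
                  refine Finset.sum_congr rfl fun j _ => ?_
                  have := hj j
                  linear_combination (Complex.I * c k j * c m i * c l i
                    * ((2 * π : ℝ) : ℂ) ^ 3) * this
              _ = (∑ j : Fin 3, (k j : ℂ) * c k j)
                    * (-(Complex.I) * (c m i * c l i * ((2 * π : ℝ) : ℂ) ^ 3)) :=
                  (Finset.sum_mul _ _ _).symm
              _ = 0 := by rw [hdiv k, zero_mul]
          · have hml : k + l + m ≠ 0 := by rwa [add_right_comm] at hk0
            rw [integral_eK, integral_eK, if_neg hk0, if_neg hml]
            simp
        have hsw : (∑ k ∈ cube n, ∑ m ∈ cube n, ∑ l ∈ cube n, ∑ i : Fin 3, ∑ j : Fin 3,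
              (c k j * (Complex.I * ((m j : ℤ) : ℂ)) * c m i * c l i)
                * ∫ x in Box, eK (k + m + l) x)
            = ∑ k ∈ cube n, ∑ m ∈ cube n, ∑ l ∈ cube n, ∑ i : Fin 3, ∑ j : Fin 3,
              (c k j * (Complex.I * ((l j : ℤ) : ℂ)) * c l i * c m i)
                * ∫ x in Box, eK (k + l + m) x :=
          Finset.sum_congr rfl fun k _ => Finset.sum_comm
        set A := ∑ k ∈ cube n, ∑ m ∈ cube n, ∑ l ∈ cube n, ∑ i : Fin 3, ∑ j : Fin 3,
              (c k j * (Complex.I * ((m j : ℤ) : ℂ)) * c m i * c l i)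
                * ∫ x in Box, eK (k + m + l) x with hA
        have h2A : A + A = 0 := by
          nth_rewrite 1 [hsw]
          nth_rewrite 1 [hA]
          rw [← Finset.sum_add_distrib]
          refine Finset.sum_eq_zero fun k _ => ?_
          rw [← Finset.sum_add_distrib]
          refine Finset.sum_eq_zero fun m _ => ?_
          rw [← Finset.sum_add_distrib]
          refine Finset.sum_eq_zero fun l _ => ?_
          rw [add_comm]
          exact hzero k m l
        exact add_self_eq_zero.mp h2A

/-! #### essSup helper -/

lemma essSup_le_of_forall_le {T c : ℝ} (hT : 0 < T) {f : ℝ → ℝ}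
    (h0 : ∀ t, 0 ≤ f t) (h : ∀ t ∈ Set.Ioo (0:ℝ) T, f t ≤ c) :
    essSup f (volume.restrict (Set.Ioo 0 T)) ≤ c := by
  have hne : (volume.restrict (Set.Ioo (0:ℝ) T)) ≠ 0 := by
    rw [ne_eq, Measure.restrict_eq_zero]
    simp only [Real.volume_Ioo, sub_zero, ENNReal.ofReal_eq_zero, not_le]
    exact hT
  haveI : (ae (volume.restrict (Set.Ioo (0:ℝ) T))).NeBot := ae_neBot.mpr hne
  refine limsup_le_of_le ?_ ?_
  · exact isCoboundedUnder_le_of_eventually_le _ (x := 0)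
      (Eventually.of_forall fun t => h0 t)
  · exact (ae_restrict_iff' measurableSet_Ioo).mpr (ae_of_all _ h)

lemma range_sum_le_split {M : ℕ} (hM : 1 ≤ M) (g : ℕ → ℝ) (hg : ∀ m, 0 ≤ g m) :
    ∑ m ∈ Finset.range M, g m ≤ g 0 + ∑ j ∈ Finset.Icc 1 M, g j := by
  have hr : Finset.range M = insert 0 (Finset.Icc 1 (M-1)) := by
    ext a
    simp only [Finset.mem_range, Finset.mem_insert, Finset.mem_Icc]
    omega
  rw [hr, Finset.sum_insert (by simp)]
  refine add_le_add le_rfl ?_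
  refine Finset.sum_le_sum_of_subset_of_nonneg ?_ (fun j _ _ => hg j)
  intro a ha
  simp only [Finset.mem_Icc] at ha ⊢
  omega

lemma range_shift_sum (M : ℕ) (g : ℕ → ℝ) :
    ∑ m ∈ Finset.range M, g (m + 1) = ∑ j ∈ Finset.Icc 1 M, g j := by
  rw [show Finset.Icc 1 M = Finset.Ico 1 (M+1) by rw [Finset.Ico_add_one_right_eq_Icc],
    Finset.sum_Ico_eq_sum_range]
  simp only [Nat.add_sub_cancel]
  exact Finset.sum_congr rfl fun m _ => by rw [Nat.add_comm]

/-! #### The discrete energy estimate -/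

lemma scheme_energy {T α : ℝ} (hT : 0 < T) (hα : α ∈ Set.Ioc (0:ℝ) 1) {n M : ℕ} (hM : 1 ≤ M)
    {c0 : Coef} (h0 : MemH2 c0) {u : ℕ → Coef} (hs : Scheme T α n M c0 u) :
    (∀ m, m ≤ M → Supp n (u m)) ∧
    (∀ m, m ≤ M → l2S (u m) ≤ 2 * H2B c0) ∧
    gradS (u 0) ≤ H2B c0 ∧
    (T / (M:ℝ)) * (∑ j ∈ Finset.Icc 1 M, gradS (u j)) ≤ H2B c0 := by
  set κ := T / (M:ℝ) with hκdef
  have hMpos : (0:ℝ) < (M:ℝ) := by exact_mod_cast hM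
  have hκ : 0 < κ := div_pos hT hMpos
  have hsupp : ∀ m, m ≤ M → Supp n (u m) := by
    intro m hm
    rcases Nat.eq_zero_or_pos m with h | h
    · rw [h, hs.1]; exact supp_projN c0
    · exact supp_of_memVn (hs.2 m h hm).1
  have hg0 : gradS (u 0) ≤ H2B c0 := by
    rw [hs.1]; exact gradS_projN_le h0 n
  have hl0 : l2S (u 0) ≤ H2B c0 := by
    rw [hs.1]; exact l2S_projN_le h0 n
  have hE0 : l2S (u 0) + α^2 * gradS (u 0) ≤ 2 * H2B c0 := by
    have hα2 : α^2 ≤ 1 := by nlinarith [hα.1, hα.2]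
    nlinarith [gradS_nonneg (u 0)]
  -- one-step estimate
  have hstep : ∀ m, 1 ≤ m → m ≤ M →
      l2S (u m) + α^2 * gradS (u m) + 2 * κ * gradS (u m)
        ≤ l2S (u (m-1)) + α^2 * gradS (u (m-1)) := by
    intro m h1 hm
    have hmem := (hs.2 m h1 hm).1
    have heq := (hs.2 m h1 hm).2 (u m) hmem
    rw [nlF_self hmem, gipS_self] at heq
    have hm1 : m - 1 ≤ M := le_trans (Nat.sub_le m 1) hm
    have hip := ipS_dtc_ge (hsupp m hm) (hsupp (m-1) hm1) hκ
    have hgip := gipS_dtc_ge (hsupp m hm) (hsupp (m-1) hm1) hκ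
    have hgipα := mul_le_mul_of_nonneg_left hgip (sq_nonneg α)
    have h5 : (l2S (u m) - l2S (u (m-1))) / (2*κ)
        + α^2 * ((gradS (u m) - gradS (u (m-1))) / (2*κ)) + gradS (u m) ≤ 0 := by
      linarith
    have h6 := mul_le_mul_of_nonneg_right h5 (by positivity : (0:ℝ) ≤ 2*κ)
    have h7 : ((l2S (u m) - l2S (u (m-1))) / (2*κ)
        + α^2 * ((gradS (u m) - gradS (u (m-1))) / (2*κ)) + gradS (u m)) * (2*κ)
        = (l2S (u m) - l2S (u (m-1))) + α^2 * (gradS (u m) - gradS (u (m-1)))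
          + 2 * κ * gradS (u m) := by
      field_simp
    rw [h7, zero_mul] at h6
    linarith
  -- induction
  have hE : ∀ m, m ≤ M → l2S (u m) + α^2 * gradS (u m)
      + 2 * κ * (∑ j ∈ Finset.Icc 1 m, gradS (u j)) ≤ l2S (u 0) + α^2 * gradS (u 0) := by
    intro m
    induction m with
    | zero => intro _; rw [show Finset.Icc 1 0 = ∅ from rfl]; simp
    | succ m ih =>
      intro hm
      have ihm := ih (le_trans (Nat.le_succ m) hm)
      have hst := hstep (m+1) (by omega) hm
      rw [Nat.add_sub_cancel] at hst
      rw [Finset.sum_Icc_succ_top (by omega : 1 ≤ m + 1)]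
      have hgnn : 0 ≤ gradS (u (m+1)) := gradS_nonneg _
      nlinarith [hκ]
  refine ⟨hsupp, ?_, hg0, ?_⟩
  · intro m hm
    have h := hE m hm
    have hsum : 0 ≤ ∑ j ∈ Finset.Icc 1 m, gradS (u j) :=
      Finset.sum_nonneg fun j _ => gradS_nonneg _
    have hg : 0 ≤ gradS (u m) := gradS_nonneg _
    nlinarith [hκ, sq_nonneg α]
  · have h := hE M le_rfl
    have hl : 0 ≤ l2S (u M) := l2S_nonneg _
    have hg : 0 ≤ gradS (u M) := gradS_nonneg _
    nlinarith [sq_nonneg α]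

end EFG

open EFG
/-- Proposition 4.4, estimates (4.1), (4.3), (4.5).
For `u₀ ∈ H²_{0,σ}` and `α ∈ (0,1]`, there is `c > 0` independent of `α`, `M`
and `n` such that the interpolants of a scheme solution satisfy
`ess sup_(0,T) ‖v‖₂ + ‖v‖_{L²(H¹)} ≤ c`, `ess sup_(0,T) ‖u‖₂ + ‖u‖_{L²(H¹)} ≤ c`
and `α ‖∇v‖_{L²(L²)} ≤ c`. -/
theorem interpolants_energy_bounds
    (T : ℝ) (hT : 0 < T) (c0 : Coef) (h0 : MemH2 c0) :
    ∃ c : ℝ, 0 < c ∧ ∀ α : ℝ, α ∈ Set.Ioc (0 : ℝ) 1 → ∀ n M : ℕ, 1 ≤ M →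
      ∀ u : ℕ → Coef, Scheme T α n M c0 u →
        (essSup (fun t => Real.sqrt (l2S (pwl T M u t)))
              (volume.restrict (Set.Ioo 0 T))
            + Real.sqrt (∫ t in Set.Ioo 0 T, l2S (pwl T M u t) + gradS (pwl T M u t))
          ≤ c) ∧
        (essSup (fun t => Real.sqrt (l2S (pwc T M u t)))
              (volume.restrict (Set.Ioo 0 T))
            + Real.sqrt (∫ t in Set.Ioo 0 T, l2S (pwc T M u t) + gradS (pwc T M u t))
          ≤ c) ∧
        α * Real.sqrt (∫ t in Set.Ioo 0 T, gradS (pwl T M u t)) ≤ c := by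
  classical
  have hB : 0 ≤ H2B c0 := H2B_nonneg c0
  set B := H2B c0 with hBdef
  refine ⟨Real.sqrt (20*B) + Real.sqrt (28*B*T + 10*B) + Real.sqrt (2*B)
    + Real.sqrt (2*B*T + B) + Real.sqrt (8*T*B + 10*B) + 1, by positivity, ?_⟩
  intro α hα n M hM u hs
  obtain ⟨hsupp, hl2, hg0, hgsum⟩ := scheme_energy hT hα hM h0 hs
  have hMpos : (0:ℝ) < (M:ℝ) := by exact_mod_cast hM
  have hκpos : 0 < T/(M:ℝ) := div_pos hT hMpos
  have hκT : T/(M:ℝ) ≤ T := by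
    rw [div_le_iff₀ hMpos]
    have hM1 : (1:ℝ) ≤ (M:ℝ) := by exact_mod_cast hM
    nlinarith
  have hTMκ : T = (M:ℝ) * (T/(M:ℝ)) := by field_simp
  -- pointwise floor facts
  have hfacts : ∀ t ∈ Set.Ioo (0:ℝ) T,
      ((⌊t/(T/(M:ℝ))⌋.toNat : ℝ) * (T/(M:ℝ)) ≤ t ∧
       t < ((⌊t/(T/(M:ℝ))⌋.toNat : ℝ) + 1) * (T/(M:ℝ)) ∧
       ⌊t/(T/(M:ℝ))⌋.toNat + 1 ≤ M) := by
    intro t ht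
    have htκ : 0 ≤ t/(T/(M:ℝ)) := le_of_lt (div_pos ht.1 hκpos)
    have hfl : (0:ℤ) ≤ ⌊t/(T/(M:ℝ))⌋ := Int.floor_nonneg.mpr htκ
    have hcast : ((⌊t/(T/(M:ℝ))⌋.toNat : ℝ)) = ((⌊t/(T/(M:ℝ))⌋ : ℤ) : ℝ) := by
      exact_mod_cast congrArg (fun z : ℤ => (z : ℝ)) (Int.toNat_of_nonneg hfl)
    refine ⟨?_, ?_, ?_⟩
    · rw [hcast, ← le_div_iff₀ hκpos]
      exact Int.floor_le _
    · rw [hcast, ← div_lt_iff₀ hκpos]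
      exact Int.lt_floor_add_one _
    · have hlt : t/(T/(M:ℝ)) < (M:ℝ) := by
        rw [div_lt_iff₀ hκpos, ← hTMκ]
        exact ht.2
      have : ⌊t/(T/(M:ℝ))⌋ < (M:ℤ) := Int.floor_lt.mpr (by exact_mod_cast hlt)
      omega
  -- step integral machinery
  have hset : Set.Ico (0:ℝ) T = Set.Ico (0:ℝ) ((M:ℝ) * (T/(M:ℝ))) := by rw [← hTMκ]
  have key : ∀ (f : ℝ → ℝ) (φ : ℕ → ℝ), (∀ t, 0 ≤ f t) →
      (∀ t ∈ Set.Ioo (0:ℝ) T, f t ≤ φ (⌊t/(T/(M:ℝ))⌋.toNat)) →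
      (∫ t in Set.Ioo 0 T, f t) ≤ ∑ m ∈ Finset.range M, (T/(M:ℝ)) * φ m := by
    intro f φ hf hle
    obtain ⟨hint, hval⟩ := step_integral_Ico hκpos φ M
    have hint' : IntegrableOn (fun t => φ (⌊t/(T/(M:ℝ))⌋.toNat)) (Set.Ioo 0 T) volume := by
      refine hint.mono_set ?_
      rw [← hTMκ]
      exact Set.Ioo_subset_Ico_self
    have hval' : (∫ t in Set.Ioo (0:ℝ) T, φ (⌊t/(T/(M:ℝ))⌋.toNat))
        = ∑ m ∈ Finset.range M, (T/(M:ℝ)) * φ m := by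
      rw [← MeasureTheory.integral_Ico_eq_integral_Ioo, hset]
      exact hval
    rw [← hval']
    refine integral_mono_of_nonneg (ae_of_all _ hf) hint' ?_
    exact (ae_restrict_iff' measurableSet_Ioo).mpr (ae_of_all _ hle)
  -- pointwise values of the interpolants
  have hpwc : ∀ t ∈ Set.Ioo (0:ℝ) T, pwc T M u t = u (⌊t/(T/(M:ℝ))⌋.toNat + 1) := by
    intro t ht
    rw [pwc, if_neg (ne_of_lt ht.2)]
  have hpwl : ∀ t ∈ Set.Ioo (0:ℝ) T, pwl T M u t = fun k i =>
      u (⌊t/(T/(M:ℝ))⌋.toNat) k i +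
        ((((t - ((⌊t/(T/(M:ℝ))⌋.toNat : ℕ) : ℝ) * (T/(M:ℝ))) / (T/(M:ℝ)) : ℝ)) : ℂ) *
          (u (⌊t/(T/(M:ℝ))⌋.toNat + 1) k i - u (⌊t/(T/(M:ℝ))⌋.toNat) k i) := by
    intro t ht
    rw [pwl, if_neg (ne_of_lt ht.2)]
  -- θ bounds
  have hθ : ∀ t ∈ Set.Ioo (0:ℝ) T,
      0 ≤ (t - ((⌊t/(T/(M:ℝ))⌋.toNat : ℕ) : ℝ) * (T/(M:ℝ))) / (T/(M:ℝ)) ∧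
      (t - ((⌊t/(T/(M:ℝ))⌋.toNat : ℕ) : ℝ) * (T/(M:ℝ))) / (T/(M:ℝ)) ≤ 1 := by
    intro t ht
    obtain ⟨h1, h2, _⟩ := hfacts t ht
    constructor
    · exact div_nonneg (by linarith) hκpos.le
    · rw [div_le_one hκpos]
      linarith
  -- pointwise bounds
  have hb_l2pwl : ∀ t ∈ Set.Ioo (0:ℝ) T, l2S (pwl T M u t) ≤ 20*B := by
    intro t ht
    obtain ⟨_, _, hmM⟩ := hfacts t ht
    obtain ⟨hθ0, hθ1⟩ := hθ t ht
    rw [hpwl t ht]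
    refine le_trans (l2S_interp_le (hsupp _ (by omega)) (hsupp _ hmM) _ hθ0 hθ1) ?_
    have ha := hl2 _ (show ⌊t/(T/(M:ℝ))⌋.toNat ≤ M by omega)
    have hb' := hl2 _ hmM
    linarith
  have hb1 : ∀ t ∈ Set.Ioo (0:ℝ) T, l2S (pwl T M u t) + gradS (pwl T M u t)
      ≤ (fun m => 8*(l2S (u m) + gradS (u m)) + 2*(l2S (u (m+1)) + gradS (u (m+1))))
          (⌊t/(T/(M:ℝ))⌋.toNat) := by
    intro t ht
    obtain ⟨_, _, hmM⟩ := hfacts t ht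
    obtain ⟨hθ0, hθ1⟩ := hθ t ht
    rw [hpwl t ht]
    have h1 := l2S_interp_le (hsupp _ (show ⌊t/(T/(M:ℝ))⌋.toNat ≤ M by omega))
      (hsupp _ hmM) _ hθ0 hθ1
    have h2 := gradS_interp_le (hsupp _ (show ⌊t/(T/(M:ℝ))⌋.toNat ≤ M by omega))
      (hsupp _ hmM) _ hθ0 hθ1
    simp only
    linarith
  have hb2 : ∀ t ∈ Set.Ioo (0:ℝ) T, l2S (pwc T M u t) + gradS (pwc T M u t)
      ≤ (fun m => l2S (u (m+1)) + gradS (u (m+1))) (⌊t/(T/(M:ℝ))⌋.toNat) := by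
    intro t ht
    rw [hpwc t ht]
  have hb3 : ∀ t ∈ Set.Ioo (0:ℝ) T, gradS (pwl T M u t)
      ≤ (fun m => 8*gradS (u m) + 2*gradS (u (m+1))) (⌊t/(T/(M:ℝ))⌋.toNat) := by
    intro t ht
    obtain ⟨_, _, hmM⟩ := hfacts t ht
    obtain ⟨hθ0, hθ1⟩ := hθ t ht
    rw [hpwl t ht]
    exact gradS_interp_le (hsupp _ (show ⌊t/(T/(M:ℝ))⌋.toNat ≤ M by omega))
      (hsupp _ hmM) _ hθ0 hθ1
  have hb_l2pwc : ∀ t ∈ Set.Ioo (0:ℝ) T, l2S (pwc T M u t) ≤ 2*B := by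
    intro t ht
    obtain ⟨_, _, hmM⟩ := hfacts t ht
    rw [hpwc t ht]
    exact hl2 _ hmM
  -- sum estimates
  have hsum_l2a : ∑ m ∈ Finset.range M, (T/(M:ℝ)) * l2S (u m) ≤ 2*B*T := by
    calc ∑ m ∈ Finset.range M, (T/(M:ℝ)) * l2S (u m)
        ≤ ∑ m ∈ Finset.range M, (T/(M:ℝ)) * (2*B) := by
          refine Finset.sum_le_sum fun m hm => ?_
          refine mul_le_mul_of_nonneg_left (hl2 m ?_) hκpos.le
          simp only [Finset.mem_range] at hm
          omega
      _ = (M:ℝ) * ((T/(M:ℝ)) * (2*B)) := by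
          rw [Finset.sum_const, Finset.card_range, nsmul_eq_mul]
      _ = 2*B*T := by field_simp
  have hsum_l2b : ∑ m ∈ Finset.range M, (T/(M:ℝ)) * l2S (u (m+1)) ≤ 2*B*T := by
    calc ∑ m ∈ Finset.range M, (T/(M:ℝ)) * l2S (u (m+1))
        ≤ ∑ m ∈ Finset.range M, (T/(M:ℝ)) * (2*B) := by
          refine Finset.sum_le_sum fun m hm => ?_
          refine mul_le_mul_of_nonneg_left (hl2 (m+1) ?_) hκpos.le
          simp only [Finset.mem_range] at hm
          omega
      _ = (M:ℝ) * ((T/(M:ℝ)) * (2*B)) := by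
          rw [Finset.sum_const, Finset.card_range, nsmul_eq_mul]
      _ = 2*B*T := by field_simp
  have hsum_ga : ∑ m ∈ Finset.range M, (T/(M:ℝ)) * gradS (u m) ≤ T*B + B := by
    have h1 : ∑ m ∈ Finset.range M, gradS (u m)
        ≤ gradS (u 0) + ∑ j ∈ Finset.Icc 1 M, gradS (u j) :=
      range_sum_le_split hM _ (fun m => gradS_nonneg _)
    rw [← Finset.mul_sum]
    have h2 := mul_le_mul_of_nonneg_left h1 hκpos.le
    have h3 : (T/(M:ℝ)) * gradS (u 0) ≤ T * B := by
      have := mul_le_mul hκT hg0 (gradS_nonneg _) hT.le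
      linarith
    rw [mul_add] at h2
    linarith
  have hsum_gb : ∑ m ∈ Finset.range M, (T/(M:ℝ)) * gradS (u (m+1)) ≤ B := by
    rw [← Finset.mul_sum, range_shift_sum M (fun j => gradS (u j))]
    exact hgsum
  -- integral bounds
  have hint1 : (∫ t in Set.Ioo (0:ℝ) T, l2S (pwl T M u t) + gradS (pwl T M u t))
      ≤ 28*B*T + 10*B := by
    refine le_trans (key _ (fun m => 8*(l2S (u m) + gradS (u m)) + 2*(l2S (u (m+1)) + gradS (u (m+1))))
      (fun t => add_nonneg (l2S_nonneg _) (gradS_nonneg _)) hb1) ?_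
    have hexp : ∑ m ∈ Finset.range M, (T/(M:ℝ)) *
        (8*(l2S (u m) + gradS (u m)) + 2*(l2S (u (m+1)) + gradS (u (m+1))))
        = 8*(∑ m ∈ Finset.range M, (T/(M:ℝ)) * l2S (u m))
          + 8*(∑ m ∈ Finset.range M, (T/(M:ℝ)) * gradS (u m))
          + 2*(∑ m ∈ Finset.range M, (T/(M:ℝ)) * l2S (u (m+1)))
          + 2*(∑ m ∈ Finset.range M, (T/(M:ℝ)) * gradS (u (m+1))) := by
      rw [Finset.mul_sum, Finset.mul_sum, Finset.mul_sum, Finset.mul_sum,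
        ← Finset.sum_add_distrib, ← Finset.sum_add_distrib, ← Finset.sum_add_distrib]
      exact Finset.sum_congr rfl fun m _ => by ring
    rw [hexp]
    linarith
  have hint2 : (∫ t in Set.Ioo (0:ℝ) T, l2S (pwc T M u t) + gradS (pwc T M u t))
      ≤ 2*B*T + B := by
    refine le_trans (key _ (fun m => l2S (u (m+1)) + gradS (u (m+1)))
      (fun t => add_nonneg (l2S_nonneg _) (gradS_nonneg _)) hb2) ?_
    have hexp : ∑ m ∈ Finset.range M, (T/(M:ℝ)) * (l2S (u (m+1)) + gradS (u (m+1)))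
        = (∑ m ∈ Finset.range M, (T/(M:ℝ)) * l2S (u (m+1)))
          + (∑ m ∈ Finset.range M, (T/(M:ℝ)) * gradS (u (m+1))) := by
      rw [← Finset.sum_add_distrib]
      exact Finset.sum_congr rfl fun m _ => by ring
    rw [hexp]
    linarith
  have hint3 : (∫ t in Set.Ioo (0:ℝ) T, gradS (pwl T M u t)) ≤ 8*T*B + 10*B := by
    refine le_trans (key _ (fun m => 8*gradS (u m) + 2*gradS (u (m+1)))
      (fun t => gradS_nonneg _) hb3) ?_
    have hexp : ∑ m ∈ Finset.range M, (T/(M:ℝ)) * (8*gradS (u m) + 2*gradS (u (m+1)))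
        = 8*(∑ m ∈ Finset.range M, (T/(M:ℝ)) * gradS (u m))
          + 2*(∑ m ∈ Finset.range M, (T/(M:ℝ)) * gradS (u (m+1))) := by
      rw [Finset.mul_sum, Finset.mul_sum, ← Finset.sum_add_distrib]
      exact Finset.sum_congr rfl fun m _ => by ring
    rw [hexp]
    linarith
  -- essSup bounds
  have hess1 : essSup (fun t => Real.sqrt (l2S (pwl T M u t)))
      (volume.restrict (Set.Ioo 0 T)) ≤ Real.sqrt (20*B) :=
    essSup_le_of_forall_le hT (fun t => Real.sqrt_nonneg _)
      (fun t ht => Real.sqrt_le_sqrt (hb_l2pwl t ht))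
  have hess2 : essSup (fun t => Real.sqrt (l2S (pwc T M u t)))
      (volume.restrict (Set.Ioo 0 T)) ≤ Real.sqrt (2*B) :=
    essSup_le_of_forall_le hT (fun t => Real.sqrt_nonneg _)
      (fun t ht => Real.sqrt_le_sqrt (hb_l2pwc t ht))
  have hs1 : Real.sqrt (∫ t in Set.Ioo (0:ℝ) T, l2S (pwl T M u t) + gradS (pwl T M u t))
      ≤ Real.sqrt (28*B*T + 10*B) := Real.sqrt_le_sqrt hint1
  have hs2 : Real.sqrt (∫ t in Set.Ioo (0:ℝ) T, l2S (pwc T M u t) + gradS (pwc T M u t))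
      ≤ Real.sqrt (2*B*T + B) := Real.sqrt_le_sqrt hint2
  have hs3 : Real.sqrt (∫ t in Set.Ioo (0:ℝ) T, gradS (pwl T M u t))
      ≤ Real.sqrt (8*T*B + 10*B) := Real.sqrt_le_sqrt hint3
  have hsn : ∀ x : ℝ, 0 ≤ Real.sqrt x := fun x => Real.sqrt_nonneg x
  refine ⟨?_, ?_, ?_⟩
  · have := hsn (2*B); have := hsn (2*B*T + B); have := hsn (8*T*B + 10*B)
    linarith
  · have := hsn (20*B); have := hsn (28*B*T + 10*B); have := hsn (8*T*B + 10*B)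
    linarith
  · have hαs : α * Real.sqrt (∫ t in Set.Ioo (0:ℝ) T, gradS (pwl T M u t))
        ≤ Real.sqrt (∫ t in Set.Ioo (0:ℝ) T, gradS (pwl T M u t)) := by
      have h' := mul_le_mul_of_nonneg_right hα.2
        (hsn (∫ t in Set.Ioo (0:ℝ) T, gradS (pwl T M u t)))
      linarith
    have := hsn (20*B); have := hsn (28*B*T + 10*B); have := hsn (2*B)
    have := hsn (2*B*T + B)
    linarith
end
end
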